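/- arXiv:1407.5208 — 5 statements merged into one kernel-verified Lean document; each statement's English description precedes it below -/
import Mathlib

section
/- Let V : ℝ → B(H) be strongly continuous, locally norm-bounded, with V(t) selfadjoint for every t. Then there exists a unique two-parameter family U(t,s) ∈ B(H), t,s ∈ ℝ, such that U(s,s) = I for all s and, for every x ∈ H and every s, the map t ↦ U(t,s)x is differentiable with i d/dt (U(t,s)x) = V(t) U(t,s) x; moreover every U(t,s) is a unitary operator. -/
open ContinuousLinearMap intervalIntegral MeasureTheory Set Filter Topology

set_option linter.unusedSectionVars false
open scoped Interval
section Aux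
variable {H : Type*} [NormedAddCommGroup H] [InnerProductSpace ℂ H] [CompleteSpace H]
variable (V : ℝ → H →L[ℂ] H)

lemma UP.exists_bound (hb : ∀ T : ℝ, 0 < T → ∃ M : ℝ, ∀ t : ℝ, |t| ≤ T → ‖V t‖ ≤ M)
    (a b : ℝ) : ∃ M : ℝ, 0 ≤ M ∧ ∀ t ∈ Icc a b, ‖V t‖ ≤ M := by
  obtain ⟨M, hM⟩ := hb (|a| + |b| + 1) (by positivity)
  refine ⟨max M 0, le_max_right _ _, fun t ht => le_trans (hM t ?_) (le_max_left _ _)⟩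
  have h1 := ht.1; have h2 := ht.2
  rw [abs_le]
  constructor
  · linarith [neg_abs_le a, abs_nonneg b]
  · linarith [le_abs_self b, abs_nonneg a]

lemma UP.cont_comp (hb : ∀ T : ℝ, 0 < T → ∃ M : ℝ, ∀ t : ℝ, |t| ≤ T → ‖V t‖ ≤ M)
    (hc : ∀ x : H, Continuous fun t => V t x)
    {f : ℝ → H} (hf : Continuous f) : Continuous fun t => V t (f t) := by
  rw [continuous_iff_continuousAt]
  intro t₀
  obtain ⟨M, hM0, hM⟩ := UP.exists_bound V hb (t₀ - 1) (t₀ + 1)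
  rw [ContinuousAt, tendsto_iff_norm_sub_tendsto_zero]
  have hbd : ∀ᶠ t in 𝓝 t₀, ‖V t (f t) - V t₀ (f t₀)‖ ≤
      M * ‖f t - f t₀‖ + ‖V t (f t₀) - V t₀ (f t₀)‖ := by
    filter_upwards [Icc_mem_nhds (by linarith : t₀ - 1 < t₀) (by linarith : t₀ < t₀ + 1)]
      with t ht
    calc ‖V t (f t) - V t₀ (f t₀)‖
        ≤ ‖V t (f t) - V t (f t₀)‖ + ‖V t (f t₀) - V t₀ (f t₀)‖ := norm_sub_le_norm_sub_add_norm_sub _ _ _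
      _ ≤ M * ‖f t - f t₀‖ + ‖V t (f t₀) - V t₀ (f t₀)‖ := by
          gcongr
          rw [← map_sub]
          exact le_trans ((V t).le_opNorm _) (by gcongr; exact hM t ht)
  have hlim : Tendsto (fun t => M * ‖f t - f t₀‖ + ‖V t (f t₀) - V t₀ (f t₀)‖) (𝓝 t₀) (𝓝 0) := by
    have h1 : Tendsto (fun t => ‖f t - f t₀‖) (𝓝 t₀) (𝓝 0) := by
      simpa using ((hf.tendsto t₀).sub (tendsto_const_nhds (x := f t₀))).norm
    have h2 : Tendsto (fun t => ‖V t (f t₀) - V t₀ (f t₀)‖) (𝓝 t₀) (𝓝 0) := by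
      simpa using (((hc (f t₀)).tendsto t₀).sub (tendsto_const_nhds (x := V t₀ (f t₀)))).norm
    simpa using (h1.const_mul M).add h2
  exact squeeze_zero' (Eventually.of_forall fun t => norm_nonneg _) hbd hlim


noncomputable def UP.dyson (s : ℝ) (x : H) : ℕ → ℝ → H
  | 0 => fun _ => x
  | n + 1 => fun t => (-Complex.I) • ∫ τ in s..t, V τ (UP.dyson s x n τ)

variable (hb : ∀ T : ℝ, 0 < T → ∃ M : ℝ, ∀ t : ℝ, |t| ≤ T → ‖V t‖ ≤ M)
variable (hc : ∀ x : H, Continuous fun t => V t x)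

include hb hc in
lemma UP.dyson_cont (s : ℝ) (x : H) : ∀ n, Continuous (UP.dyson V s x n) := by
  intro n
  induction n with
  | zero => exact continuous_const
  | succ n ih =>
      have h := UP.cont_comp V hb hc ih
      exact (intervalIntegral.continuous_primitive
        (fun a' b' => h.intervalIntegrable a' b') s).const_smul _

lemma UP.dyson_bound {s : ℝ} (x : H) {a b M : ℝ} (hs : s ∈ Icc a b) (hM0 : 0 ≤ M)
    (hM : ∀ t ∈ Icc a b, ‖V t‖ ≤ M) :
    ∀ n, ∀ t ∈ Icc a b, ‖UP.dyson V s x n t‖ ≤ ‖x‖ * (M ^ n * |t - s| ^ n / n.factorial) := by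
  intro n
  induction n with
  | zero => intro t _; simp [UP.dyson]
  | succ n ih =>
      intro t ht
      have hsub : Ι s t ⊆ Icc a b := fun τ hτ =>
        ⟨le_trans (le_min hs.1 ht.1) (le_of_lt hτ.1), le_trans hτ.2 (max_le hs.2 ht.2)⟩
      set C : ℝ := ‖x‖ * M ^ (n+1) / n.factorial with hC
      have hC0 : 0 ≤ C := by positivity
      have hg : Continuous fun τ : ℝ => C * |τ - s| ^ n :=
        (continuous_const.mul ((continuous_id.sub continuous_const).abs.pow n))
      have key : ‖∫ τ in s..t, V τ (UP.dyson V s x n τ)‖ ≤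
          |∫ τ in s..t, C * |τ - s| ^ n| := by
        apply intervalIntegral.norm_integral_le_abs_of_norm_le _ (hg.intervalIntegrable _ _)
        refine (MeasureTheory.ae_restrict_iff' measurableSet_uIoc).mpr (Eventually.of_forall ?_)
        intro τ hτ
        have hτ' := hsub hτ
        have h1 : ‖V τ (UP.dyson V s x n τ)‖ ≤ M * (‖x‖ * (M ^ n * |τ - s| ^ n / n.factorial)) := by
          refine le_trans ((V τ).le_opNorm _) ?_
          have := ih τ hτ'
          have hMτ := hM τ hτ'
          exact mul_le_mul hMτ this (norm_nonneg _) hM0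
        refine le_trans h1 (le_of_eq ?_)
        rw [hC]
        field_simp
        ring
      have habs : |∫ τ in s..t, C * |τ - s| ^ n| = C * (|t - s| ^ (n+1) / (n+1)) := by
        rw [intervalIntegral.abs_intervalIntegral_eq]
        rw [MeasureTheory.integral_const_mul]
        rw [integral_pow_abs_sub_uIoc]
        rw [abs_of_nonneg (by positivity)]
      calc ‖UP.dyson V s x (n+1) t‖ = ‖∫ τ in s..t, V τ (UP.dyson V s x n τ)‖ := by
            rw [UP.dyson]; rw [norm_smul]; simp
        _ ≤ C * (|t - s| ^ (n+1) / (n+1)) := le_trans key (le_of_eq habs)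
        _ = ‖x‖ * (M ^ (n+1) * |t - s| ^ (n+1) / (n+1).factorial) := by
            rw [hC, Nat.factorial_succ]
            have h1 : (n.factorial : ℝ) ≠ 0 := by positivity
            have h2 : ((n:ℝ) + 1) ≠ 0 := by positivity
            field_simp
            push_cast
            ring


lemma UP.summable_aux (c r : ℝ) : Summable (fun n : ℕ => c * (r ^ n / n.factorial)) :=
  (Real.summable_pow_div_factorial r).mul_left c

include hb in
lemma UP.dyson_summable (s : ℝ) (x : H) (t : ℝ) :
    Summable (fun n => UP.dyson V s x n t) := by
  obtain ⟨M, hM0, hM⟩ := UP.exists_bound V hb (min s t) (max s t)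
  have hs : s ∈ Icc (min s t) (max s t) := ⟨min_le_left _ _, le_max_left _ _⟩
  have ht : t ∈ Icc (min s t) (max s t) := ⟨min_le_right _ _, le_max_right _ _⟩
  apply Summable.of_norm_bounded (UP.summable_aux (‖x‖) (M * |t - s|))
  intro n
  refine le_trans (UP.dyson_bound V x hs hM0 hM n t ht) (le_of_eq ?_)
  rw [mul_pow]

noncomputable def UP.sol (s : ℝ) (x : H) (t : ℝ) : H := ∑' n, UP.dyson V s x n t

include hb hc in
lemma UP.sol_unif {s a b M : ℝ} (x : H) (hs : s ∈ Icc a b) (hM0 : 0 ≤ M)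
    (hM : ∀ t ∈ Icc a b, ‖V t‖ ≤ M) :
    TendstoUniformlyOn (fun N t => ∑ n ∈ Finset.range N, UP.dyson V s x n t)
      (UP.sol V s x) atTop (Icc a b) := by
  apply tendstoUniformlyOn_tsum_nat (UP.summable_aux (‖x‖) (M * (|a - s| + |b - s|)))
  intro n t ht
  refine le_trans (UP.dyson_bound V x hs hM0 hM n t ht) ?_
  rw [mul_pow, ← mul_div_assoc, ← mul_div_assoc]
  gcongr
  have h1 : |t - s| ≤ |a - s| + |b - s| := by
    rw [abs_le]
    have := ht.1; have := ht.2
    constructor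
    · linarith [neg_abs_le (a - s), abs_nonneg (b - s)]
    · linarith [le_abs_self (b - s), abs_nonneg (a - s)]
  exact h1

include hb hc in
lemma UP.sol_cont (s : ℝ) (x : H) : Continuous (UP.sol V s x) := by
  rw [continuous_iff_continuousAt]
  intro t₀
  set a := min s t₀ - 1
  set b := max s t₀ + 1
  obtain ⟨M, hM0, hM⟩ := UP.exists_bound V hb a b
  have hs : s ∈ Icc a b := by
    constructor
    · have := min_le_left s t₀; simp only [a]; linarith
    · have := le_max_left s t₀; simp only [b]; linarith
  have hcon : ContinuousOn (UP.sol V s x) (Icc a b) := by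
    apply (UP.sol_unif V hb hc x hs hM0 hM).continuousOn
    exact (Eventually.of_forall fun N =>
      (continuousOn_finset_sum _ fun n _ => (UP.dyson_cont V hb hc s x n).continuousOn)).frequently
  apply hcon.continuousAt
  apply Icc_mem_nhds
  · have := min_le_right s t₀; simp only [a]; linarith
  · have := le_max_right s t₀; simp only [b]; linarith


include hb hc in
lemma UP.sol_fixed (s : ℝ) (x : H) (t : ℝ) :
    UP.sol V s x t = x + (-Complex.I) • ∫ τ in s..t, V τ (UP.sol V s x τ) := by
  obtain ⟨M, hM0, hM⟩ := UP.exists_bound V hb (min s t) (max s t)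
  have hs : s ∈ Icc (min s t) (max s t) := ⟨min_le_left _ _, le_max_left _ _⟩
  have ht : t ∈ Icc (min s t) (max s t) := ⟨min_le_right _ _, le_max_right _ _⟩
  set S : ℕ → ℝ → H := fun N τ => ∑ n ∈ Finset.range N, UP.dyson V s x n τ with hS
  -- recurrence for the partial sums
  have hrec : ∀ N τ, S (N + 1) τ = x + (-Complex.I) • ∫ ρ in s..τ, V ρ (S N ρ) := by
    intro N τ
    have hint : ∀ n, IntervalIntegrable (fun ρ => V ρ (UP.dyson V s x n ρ)) volume s τ :=
      fun n => (UP.cont_comp V hb hc (UP.dyson_cont V hb hc s x n)).intervalIntegrable _ _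
    have h1 : ∫ ρ in s..τ, V ρ (S N ρ) =
        ∑ n ∈ Finset.range N, ∫ ρ in s..τ, V ρ (UP.dyson V s x n ρ) := by
      rw [← intervalIntegral.integral_finset_sum (fun n _ => hint n)]
      apply intervalIntegral.integral_congr
      intro ρ _
      simp [hS, map_sum]
    rw [h1, Finset.smul_sum]
    simp only [hS]
    rw [Finset.sum_range_succ']
    simp only [UP.dyson]
    rw [add_comm]
  -- limit of partial sums
  have hlim1 : Tendsto (fun N => S (N + 1) t) atTop (𝓝 (UP.sol V s x t)) :=
    ((UP.dyson_summable V hb s x t).hasSum.tendsto_sum_nat).comp (tendsto_add_atTop_nat 1)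
  -- limit of the integrals
  have husum := UP.summable_aux (‖x‖) (M * (|min s t - s| + |max s t - s|))
  have hC0 : 0 ≤ ∑' n, ‖x‖ * ((M * (|min s t - s| + |max s t - s|)) ^ n / n.factorial) :=
    tsum_nonneg (fun n => by positivity)
  set C : ℝ := ∑' n, ‖x‖ * ((M * (|min s t - s| + |max s t - s|)) ^ n / n.factorial) with hCdef
  have hSb : ∀ N τ, τ ∈ Icc (min s t) (max s t) → ‖S N τ‖ ≤ C := by
    intro N τ hτ
    refine le_trans (norm_sum_le _ _) ?_
    refine le_trans (Finset.sum_le_sum (fun n _ => ?_)) (husum.sum_le_tsum _ (fun n _ => by positivity))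
    refine le_trans (UP.dyson_bound V x hs hM0 hM n τ hτ) ?_
    rw [mul_pow, ← mul_div_assoc, ← mul_div_assoc]
    gcongr
    rw [abs_le]
    have := hτ.1; have := hτ.2
    constructor
    · linarith [neg_abs_le (min s t - s), abs_nonneg (max s t - s)]
    · linarith [le_abs_self (max s t - s), abs_nonneg (min s t - s)]
  have hsub : Ι s t ⊆ Icc (min s t) (max s t) := fun τ hτ =>
    ⟨le_of_lt hτ.1, hτ.2⟩
  have hlim2 : Tendsto (fun N => ∫ ρ in s..t, V ρ (S N ρ)) atTop
      (𝓝 (∫ ρ in s..t, V ρ (UP.sol V s x ρ))) := by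
    apply intervalIntegral.tendsto_integral_filter_of_dominated_convergence
      (fun τ => M * C)
    · exact Eventually.of_forall fun N =>
        ((UP.cont_comp V hb hc (continuous_finset_sum _
          (fun n _ => UP.dyson_cont V hb hc s x n))).aestronglyMeasurable).restrict
    · refine Eventually.of_forall fun N => Eventually.of_forall fun τ hτ => ?_
      refine le_trans ((V τ).le_opNorm _) ?_
      exact mul_le_mul (hM τ (hsub hτ)) (hSb N τ (hsub hτ)) (norm_nonneg _) hM0
    · exact intervalIntegrable_const
    · refine Eventually.of_forall fun τ hτ => ?_
      have h1 : Tendsto (fun N => S N τ) atTop (𝓝 (UP.sol V s x τ)) :=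
        (UP.dyson_summable V hb s x τ).hasSum.tendsto_sum_nat
      exact ((V τ).continuous.tendsto _).comp h1
  have hlim3 : Tendsto (fun N => x + (-Complex.I) • ∫ ρ in s..t, V ρ (S N ρ)) atTop
      (𝓝 (x + (-Complex.I) • ∫ ρ in s..t, V ρ (UP.sol V s x ρ))) :=
    tendsto_const_nhds.add (hlim2.const_smul _)
  have := tendsto_nhds_unique hlim1 (by simpa only [hrec] using hlim3 : Tendsto (fun N => S (N+1) t) atTop _)
  exact this

include hb hc in
lemma UP.sol_init (s : ℝ) (x : H) : UP.sol V s x s = x := by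
  rw [UP.sol_fixed V hb hc s x s]
  simp

include hb hc in
lemma UP.sol_hasDerivAt (s : ℝ) (x : H) (t : ℝ) :
    HasDerivAt (fun τ => UP.sol V s x τ) ((-Complex.I) • V t (UP.sol V s x t)) t := by
  have hg : Continuous fun τ => V τ (UP.sol V s x τ) :=
    UP.cont_comp V hb hc (UP.sol_cont V hb hc s x)
  have h1 : HasDerivAt (fun u => ∫ τ in s..u, V τ (UP.sol V s x τ)) (V t (UP.sol V s x t)) t :=
    (hg.integral_hasStrictDerivAt s t).hasDerivAt
  have h2 : HasDerivAt (fun u => x + (-Complex.I) • ∫ τ in s..u, V τ (UP.sol V s x τ))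
      ((-Complex.I) • V t (UP.sol V s x t)) t := (h1.const_smul _).const_add _
  exact h2.congr_of_eventuallyEq (Eventually.of_forall fun τ => UP.sol_fixed V hb hc s x τ)


include hb in
lemma UP.ode_unique {s : ℝ} {f g : ℝ → H}
    (hf : ∀ t, HasDerivAt f ((-Complex.I) • V t (f t)) t)
    (hg : ∀ t, HasDerivAt g ((-Complex.I) • V t (g t)) t)
    (h0 : f s = g s) : f = g := by
  funext t
  rcases eq_or_ne t s with rfl | hts
  · exact h0
  set a : ℝ := min s t - 1 with ha
  set b : ℝ := max s t + 1 with hbd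
  obtain ⟨M, hM0, hM⟩ := UP.exists_bound V hb a b
  have hab : ∀ τ, max a (min b τ) ∈ Icc a b := by
    intro τ
    have h1 : a ≤ b := by
      simp only [ha, hbd]
      linarith [min_le_left s t, le_max_left s t]
    exact ⟨le_max_left _ _, max_le h1 (min_le_left _ _)⟩
  set vv : ℝ → H → H := fun τ y => (-Complex.I) • V (max a (min b τ)) y with hvv
  have hlip : ∀ τ, LipschitzOnWith M.toNNReal (vv τ) univ := by
    intro τ
    apply LipschitzWith.lipschitzOnWith
    apply LipschitzWith.of_dist_le_mul
    intro y z
    simp only [hvv, dist_eq_norm, ← smul_sub, ← map_sub, norm_smul]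
    simp only [norm_neg, Complex.norm_I, one_mul]
    rw [Real.coe_toNNReal M hM0]
    exact le_trans ((V _).le_opNorm _) (by gcongr; exact hM _ (hab τ))
  have hmem : ∀ τ ∈ Ioo a b, max a (min b τ) = τ := by
    intro τ hτ
    rw [min_eq_right (le_of_lt hτ.2), max_eq_right (le_of_lt hτ.1)]
  have hsIoo : s ∈ Ioo a b := by
    constructor
    · simp only [ha]; linarith [min_le_left s t]
    · simp only [hbd]; linarith [le_max_left s t]
  have htIcc : t ∈ Icc a b := by
    constructor
    · simp only [ha]; linarith [min_le_right s t]
    · simp only [hbd]; linarith [le_max_right s t]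
  have key := ODE_solution_unique_of_mem_Icc (v := vv) (s := fun _ => (univ : Set H))
    (fun τ _ => hlip τ) hsIoo
    (fun τ _ => (hf τ).continuousAt.continuousWithinAt)
    (fun τ hτ => by rw [hvv]; simp only [hmem τ hτ]; exact hf τ)
    (fun τ _ => mem_univ _)
    (fun τ _ => (hg τ).continuousAt.continuousWithinAt)
    (fun τ hτ => by rw [hvv]; simp only [hmem τ hτ]; exact hg τ)
    (fun τ _ => mem_univ _)
    h0
  exact key htIcc

lemma UP.norm_conserved (hsa : ∀ t : ℝ, IsSelfAdjoint (V t)) {f : ℝ → H}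
    (hf : ∀ t, HasDerivAt f ((-Complex.I) • V t (f t)) t) (t t' : ℝ) :
    ‖f t‖ = ‖f t'‖ := by
  set φ : ℝ → ℂ := fun τ => @inner ℂ _ _ (f τ) (f τ) with hφ
  have hder : ∀ τ, HasDerivAt φ 0 τ := by
    intro τ
    have h1 := HasDerivAt.inner ℂ (hf τ) (hf τ)
    have h2 : (@inner ℂ _ _ (f τ) ((-Complex.I) • V τ (f τ)) +
        @inner ℂ _ _ ((-Complex.I) • V τ (f τ)) (f τ)) = 0 := by
      rw [inner_smul_right, inner_smul_left]
      have h3 : @inner ℂ _ _ (V τ (f τ)) (f τ) = @inner ℂ _ _ (f τ) (V τ (f τ)) :=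
        ((ContinuousLinearMap.isSelfAdjoint_iff_isSymmetric).mp (hsa τ)).apply_clm _ _
      rw [h3]
      simp [Complex.conj_I]
    rw [← h2]
    exact h1
  have hconst : φ t = φ t' := by
    apply is_const_of_deriv_eq_zero
    · exact fun τ => (hder τ).differentiableAt
    · exact fun τ => (hder τ).deriv
  have h5 : ‖f t‖ ^ 2 = ‖f t'‖ ^ 2 := by
    simp only [hφ] at hconst
    rw [inner_self_eq_norm_sq_to_K (𝕜 := ℂ), inner_self_eq_norm_sq_to_K (𝕜 := ℂ)] at hconst
    exact_mod_cast hconst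
  rw [← Real.sqrt_sq (norm_nonneg (f t)), ← Real.sqrt_sq (norm_nonneg (f t')), h5]

end Aux



open ContinuousLinearMap

/-- **Existence and uniqueness of the unitary propagator.**
Let `V : ℝ → B(H)` be strongly continuous, locally norm-bounded, with `V t` selfadjoint for
every `t`. Then there exists a unique two-parameter family `U t s ∈ B(H)` such that
`U s s = 1` for all `s` and, for every `x ∈ H` and every `s`, the map `t ↦ U t s x` is
differentiable with `i d/dt (U t s x) = V t (U t s x)` (equivalently,
`d/dt (U t s x) = -i • V t (U t s x)`); moreover every `U t s` is a unitary operator. -/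
theorem unitary_propagator_exists_unique
    {H : Type*} [NormedAddCommGroup H] [InnerProductSpace ℂ H] [CompleteSpace H]
    (V : ℝ → H →L[ℂ] H)
    (hV_strong_cont : ∀ x : H, Continuous fun t => V t x)
    (hV_loc_bdd : ∀ T : ℝ, 0 < T → ∃ M : ℝ, ∀ t : ℝ, |t| ≤ T → ‖V t‖ ≤ M)
    (hV_sa : ∀ t : ℝ, IsSelfAdjoint (V t)) :
    ∃ U : ℝ → ℝ → H →L[ℂ] H,
      ((∀ s : ℝ, U s s = 1) ∧
        (∀ (s : ℝ) (x : H) (t : ℝ),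
          HasDerivAt (fun τ : ℝ => U τ s x) (-(Complex.I) • V t (U t s x)) t)) ∧
      (∀ t s : ℝ, U t s ∈ unitary (H →L[ℂ] H)) ∧
      (∀ U' : ℝ → ℝ → H →L[ℂ] H,
        ((∀ s : ℝ, U' s s = 1) ∧
          (∀ (s : ℝ) (x : H) (t : ℝ),
            HasDerivAt (fun τ : ℝ => U' τ s x) (-(Complex.I) • V t (U' t s x)) t)) →
        U' = U) := by

  have hb := hV_loc_bdd
  have hc := hV_strong_cont
  have hadd : ∀ s (x y : H) (t : ℝ), UP.sol V s (x + y) t = UP.sol V s x t + UP.sol V s y t := by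
    intro s x y t
    have h1 : ∀ τ, HasDerivAt (fun τ => UP.sol V s x τ + UP.sol V s y τ)
        ((-Complex.I) • V τ (UP.sol V s x τ + UP.sol V s y τ)) τ := by
      intro τ
      have := (UP.sol_hasDerivAt V hb hc s x τ).add (UP.sol_hasDerivAt V hb hc s y τ)
      exact this.congr_deriv (by rw [map_add, smul_add])
    have h2 := UP.ode_unique V hb (UP.sol_hasDerivAt V hb hc s (x + y)) h1
      (by rw [UP.sol_init V hb hc, UP.sol_init V hb hc, UP.sol_init V hb hc])
    exact congrFun h2 t
  have hsmul : ∀ s (c : ℂ) (x : H) (t : ℝ), UP.sol V s (c • x) t = c • UP.sol V s x t := by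
    intro s c x t
    have h1 : ∀ τ, HasDerivAt (fun τ => c • UP.sol V s x τ)
        ((-Complex.I) • V τ (c • UP.sol V s x τ)) τ := by
      intro τ
      have := (UP.sol_hasDerivAt V hb hc s x τ).const_smul c
      have heq : (-Complex.I) • V τ (c • UP.sol V s x τ)
          = c • ((-Complex.I) • V τ (UP.sol V s x τ)) := by
        rw [(V τ).map_smul, smul_comm]
      rw [heq]
      exact this
    have h2 := UP.ode_unique V hb (UP.sol_hasDerivAt V hb hc s (c • x)) h1
      (by rw [UP.sol_init V hb hc, UP.sol_init V hb hc])
    exact congrFun h2 t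
  have hnorm : ∀ s (x : H) (t : ℝ), ‖UP.sol V s x t‖ = ‖x‖ := by
    intro s x t
    have := UP.norm_conserved V hV_sa (UP.sol_hasDerivAt V hb hc s x) t s
    rwa [UP.sol_init V hb hc] at this
  set U : ℝ → ℝ → H →L[ℂ] H := fun t s => LinearMap.mkContinuous
    { toFun := fun x => UP.sol V s x t
      map_add' := fun x y => hadd s x y t
      map_smul' := fun c x => hsmul s c x t } 1
    (fun x => by rw [one_mul]; exact le_of_eq (hnorm s x t)) with hU
  have hUapp : ∀ t s (x : H), U t s x = UP.sol V s x t := fun _ _ _ => rfl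
  have hgroup : ∀ t s (x : H), UP.sol V s (UP.sol V t x s) t = x := by
    intro t s x
    have h2 := UP.ode_unique V hb (s := s)
      (UP.sol_hasDerivAt V hb hc s (UP.sol V t x s))
      (UP.sol_hasDerivAt V hb hc t x)
      (UP.sol_init V hb hc s (UP.sol V t x s))
    rw [congrFun h2 t, UP.sol_init V hb hc t x]
  have hUmul : ∀ t s : ℝ, U t s * U s t = 1 := by
    intro t s
    ext x
    rw [ContinuousLinearMap.mul_apply, hUapp, hUapp, ContinuousLinearMap.one_apply]
    exact hgroup t s x
  refine ⟨U, ⟨?_, ?_⟩, ?_, ?_⟩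
  · intro s
    ext x
    rw [hUapp, ContinuousLinearMap.one_apply]
    exact UP.sol_init V hb hc s x
  · intro s x t
    exact UP.sol_hasDerivAt V hb hc s x t
  · intro t s
    rw [Unitary.mem_iff]
    have hiso : ∀ x y : H, (inner ℂ ((U t s) x) ((U t s) y) : ℂ) = inner ℂ x y := by
      intro x y
      exact LinearIsometry.inner_map_map
        { toLinearMap := (U t s : H →ₗ[ℂ] H), norm_map' := fun z => hnorm s z t } x y
    have hstar1 : star (U t s) * U t s = 1 := by
      ext x
      rw [ContinuousLinearMap.mul_apply, ContinuousLinearMap.star_eq_adjoint,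
        ContinuousLinearMap.one_apply]
      apply ext_inner_left ℂ
      intro v
      rw [ContinuousLinearMap.adjoint_inner_right]
      exact hiso v x
    refine ⟨hstar1, ?_⟩
    have hstar2 : star (U t s) = U s t := by
      calc star (U t s) = star (U t s) * (U t s * U s t) := by rw [hUmul, mul_one]
        _ = (star (U t s) * U t s) * U s t := by rw [mul_assoc]
        _ = U s t := by rw [hstar1, one_mul]
    rw [hstar2]
    exact hUmul t s
  · rintro U' ⟨h1, h2⟩
    funext t s
    ext x
    have h0 : U' s s x = UP.sol V s x s := by
      rw [h1 s, ContinuousLinearMap.one_apply, UP.sol_init V hb hc]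
    have h3 := UP.ode_unique V hb (s := s) (f := fun τ => U' τ s x)
      (g := fun τ => UP.sol V s x τ) (h2 s x) (UP.sol_hasDerivAt V hb hc s x) h0
    exact congrFun h3 t
end

section
/- Let V_L, V_R : ℝ → B(H) be strongly continuous, locally norm-bounded, with V_L(t), V_R(t) selfadjoint for every t, and let C : ℝ → B(H) satisfy, for every x ∈ H, that t ↦ C(t)x is differentiable with i d/dt(C(t)x) = V_L(t)C(t)x + C(t)V_R(t)x. If C(0) is a Hilbert–Schmidt operator, then C(t) is Hilbert–Schmidt for every t ∈ ℝ and its Hilbert–Schmidt norm is conserved: ‖C(t)‖_{HS} = ‖C(0)‖_{HS} for all t (equivalently, tr C(t)C(t)* is constant in t). -/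
open ContinuousLinearMap MeasureTheory intervalIntegral
open scoped InnerProductSpace Topology ENNReal NNReal

set_option linter.unusedSectionVars false
set_option maxHeartbeats 1000000

section HSAux

variable {H : Type*} [NormedAddCommGroup H] [InnerProductSpace ℂ H] [CompleteSpace H]

lemma hs_cont_apply (W : ℝ → H →L[ℂ] H) (hW : ∀ x : H, Continuous fun s => W s x)
    (M : ℝ) (hM : ∀ s, ‖W s‖ ≤ M) {b : ℝ → H} (hb : Continuous b) :
    Continuous fun s => W s (b s) := by
  rw [continuous_iff_continuousAt]
  intro v
  have h1 : Filter.Tendsto (fun s => W s (b s - b v)) (nhds v) (nhds 0) := by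
    apply squeeze_zero_norm (a := fun s => M * ‖b s - b v‖)
    · intro s; exact (W s).le_of_opNorm_le (hM s) _
    · have : Filter.Tendsto (fun s => M * ‖b s - b v‖) (nhds v) (nhds (M * ‖b v - b v‖)) :=
        (tendsto_const_nhds.mul ((hb.tendsto v).sub tendsto_const_nhds).norm)
      simpa using this
  have h2 : Filter.Tendsto (fun s => W s (b v)) (nhds v) (nhds (W v (b v))) :=
    (hW (b v)).tendsto v
  have := h1.add h2
  simp only [ContinuousAt]
  convert this using 2 with s
  · rw [← map_add]; congr 1; abel
  · simp


/-- Global existence for the linear ODE `y' = W s (y s)` with globally bounded,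
strongly continuous `W`. -/
lemma exists_global_solution (W : ℝ → H →L[ℂ] H) (hW : ∀ x : H, Continuous fun s => W s x)
    (M : ℝ) (hM : ∀ s, ‖W s‖ ≤ M) (t0 : ℝ) (x : H) :
    ∃ y : ℝ → H, y t0 = x ∧ ∀ s, HasDerivAt y (W s (y s)) s := by
  have hM0 : 0 ≤ M := le_trans (norm_nonneg (W t0)) (hM t0)
  -- Picard iterates
  let T : ℕ → ℝ → H := fun n => Nat.rec (fun _ => x) (fun _ Tn => fun s => ∫ u in t0..s, W u (Tn u)) n
  have hT0 : T 0 = fun _ => x := rfl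
  have hTsucc : ∀ n s, T (n + 1) s = ∫ u in t0..s, W u (T n u) := fun n s => rfl
  -- continuity of iterates
  have hTcont : ∀ n, Continuous (T n) := by
    intro n
    induction n with
    | zero => exact continuous_const
    | succ n ih =>
      have hg : Continuous fun u => W u (T n u) := hs_cont_apply W hW M hM ih
      have : Continuous fun s => ∫ u in t0..s, W u (T n u) :=
        continuous_primitive (fun a b => hg.intervalIntegrable a b) t0
      simpa [hTsucc] using this
  -- bound on iterates
  have hTbd : ∀ n s, ‖T n s‖ ≤ ‖x‖ * (M * |s - t0|) ^ n / n.factorial := by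
    intro n
    induction n with
    | zero => intro s; rw [hT0]; simp
    | succ n ih =>
      intro s
      have hg : Continuous fun u => W u (T n u) := hs_cont_apply W hW M hM (hTcont n)
      have h1 : ‖T (n + 1) s‖ ≤ ∫ u in Set.uIoc t0 s, ‖W u (T n u)‖ := by
        rw [hTsucc]; exact intervalIntegral.norm_integral_le_integral_norm_uIoc
      set c : ℝ := M ^ (n + 1) * ‖x‖ / n.factorial with hc
      have h2 : ∫ u in Set.uIoc t0 s, ‖W u (T n u)‖ ≤ ∫ u in Set.uIoc t0 s, c * |u - t0| ^ n := by
        apply setIntegral_mono_on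
        · exact (hg.norm.integrableOn_uIoc)
        · exact (((continuous_const.mul (((continuous_id.sub continuous_const).abs).pow n))).integrableOn_uIoc)
        · exact measurableSet_uIoc
        · intro u _
          calc ‖W u (T n u)‖ ≤ M * ‖T n u‖ := (W u).le_of_opNorm_le (hM u) _
            _ ≤ M * (‖x‖ * (M * |u - t0|) ^ n / n.factorial) := by
                exact mul_le_mul_of_nonneg_left (ih u) hM0
            _ = c * |u - t0| ^ n := by rw [hc, mul_pow]; ring
      have h3 : ∫ u in Set.uIoc t0 s, c * |u - t0| ^ n = c * (|s - t0| ^ (n + 1) / (n + 1)) := by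
        rw [MeasureTheory.integral_const_mul, integral_pow_abs_sub_uIoc]
      calc ‖T (n + 1) s‖ ≤ c * (|s - t0| ^ (n + 1) / (n + 1)) := le_trans h1 (le_trans h2 (le_of_eq h3))
        _ = ‖x‖ * (M * |s - t0|) ^ (n + 1) / (n + 1).factorial := by
            rw [hc, Nat.factorial_succ, mul_pow]
            push_cast
            field_simp
  -- summability
  have hsum : ∀ s : ℝ, Summable fun n => T n s := by
    intro s
    apply Summable.of_norm_bounded ((Real.summable_pow_div_factorial (M * |s - t0|)).mul_left ‖x‖)
    intro n
    calc ‖T n s‖ ≤ ‖x‖ * (M * |s - t0|) ^ n / n.factorial := hTbd n s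
      _ = ‖x‖ * ((M * |s - t0|) ^ n / n.factorial) := by ring
  set y : ℝ → H := fun s => ∑' n, T n s with hy
  have hy0 : y t0 = x := by
    rw [hy]
    simp only
    rw [(hsum t0).tsum_eq_zero_add]
    have : ∀ n : ℕ, T (n + 1) t0 = 0 := by intro n; rw [hTsucc]; simp
    simp [this, hT0]
  -- continuity of y via locally uniform convergence
  have hycont : Continuous y := by
    rw [continuous_iff_continuousAt]
    intro v
    set R : ℝ := |v - t0| + 1 with hR
    have hcont_on : ContinuousOn y (Set.Icc (v - 1) (v + 1)) := by
      have hu : Summable fun n => ‖x‖ * ((M * R) ^ n / n.factorial) :=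
        (Real.summable_pow_div_factorial (M * R)).mul_left ‖x‖
      apply TendstoUniformlyOn.continuousOn
        (tendstoUniformlyOn_tsum_nat hu ?_) (Filter.Frequently.of_forall ?_)
      · intro n u hu'
        have h2 : |u - t0| ≤ R := by
          rw [hR]
          have h3 : |u - v| ≤ 1 := abs_le.mpr ⟨by linarith [hu'.1], by linarith [hu'.2]⟩
          calc |u - t0| ≤ |u - v| + |v - t0| := abs_sub_le u v t0
            _ ≤ |v - t0| + 1 := by linarith
        calc ‖T n u‖ ≤ ‖x‖ * (M * |u - t0|) ^ n / n.factorial := hTbd n u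
          _ ≤ ‖x‖ * (M * R) ^ n / n.factorial := by
              gcongr
              all_goals first | exact mul_nonneg hM0 (abs_nonneg _) | exact mul_le_mul_of_nonneg_left h2 hM0
          _ = ‖x‖ * ((M * R) ^ n / n.factorial) := by ring
      · intro N
        exact (continuous_finset_sum _ fun n _ => hTcont n).continuousOn
    exact hcont_on.continuousAt (Icc_mem_nhds (by linarith) (by linarith))
  -- the integral equation
  have hInt : ∀ n, Continuous fun u => W u (T n u) := fun n => hs_cont_apply W hW M hM (hTcont n)
  have heq : ∀ s : ℝ, y s = x + ∫ u in t0..s, W u (y u) := by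
    intro s
    set R0 : ℝ := |s - t0| with hR0
    have hKsum : Summable fun n => ‖x‖ * ((M * R0) ^ n / n.factorial) :=
      (Real.summable_pow_div_factorial (M * R0)).mul_left ‖x‖
    set Kc : ℝ := ∑' n, ‖x‖ * ((M * R0) ^ n / n.factorial) with hKc
    have hlim1 : Filter.Tendsto (fun N => ∫ u in t0..s, W u (∑ n ∈ Finset.range N, T n u))
        Filter.atTop (𝓝 (∫ u in t0..s, W u (y u))) := by
      apply intervalIntegral.tendsto_integral_filter_of_dominated_convergence (fun _ => M * Kc)
      · exact Filter.Eventually.of_forall fun N =>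
          (hs_cont_apply W hW M hM (continuous_finset_sum _ fun n _ => hTcont n)).aestronglyMeasurable
      · apply Filter.Eventually.of_forall
        intro N
        apply Filter.Eventually.of_forall
        intro u hu
        have h2 : |u - t0| ≤ R0 := by
          rw [hR0, abs_le]
          rcases Set.mem_uIoc.mp hu with ⟨h1', h2'⟩ | ⟨h1', h2'⟩ <;>
            constructor <;> linarith [le_abs_self (s - t0), neg_abs_le (s - t0)]
        have hb : ‖∑ n ∈ Finset.range N, T n u‖ ≤ Kc := by
          calc ‖∑ n ∈ Finset.range N, T n u‖ ≤ ∑ n ∈ Finset.range N, ‖T n u‖ :=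
                norm_sum_le _ _
            _ ≤ ∑ n ∈ Finset.range N, ‖x‖ * ((M * R0) ^ n / n.factorial) := by
                apply Finset.sum_le_sum
                intro n _
                calc ‖T n u‖ ≤ ‖x‖ * (M * |u - t0|) ^ n / n.factorial := hTbd n u
                  _ ≤ ‖x‖ * (M * R0) ^ n / n.factorial := by
                      gcongr
                      all_goals first
                        | exact mul_nonneg hM0 (abs_nonneg _)
                        | exact mul_le_mul_of_nonneg_left h2 hM0
                  _ = ‖x‖ * ((M * R0) ^ n / n.factorial) := by ring
            _ ≤ Kc := hKsum.sum_le_tsum _ (fun n _ => by positivity)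
        exact le_trans ((W u).le_of_opNorm_le (hM u) _) (mul_le_mul_of_nonneg_left hb hM0)
      · exact intervalIntegrable_const
      · apply Filter.Eventually.of_forall
        intro u _
        exact ((W u).continuous.tendsto _).comp (hsum u).hasSum.tendsto_sum_nat
    have hlim2 : ∀ N, (∫ u in t0..s, W u (∑ n ∈ Finset.range N, T n u))
        = ∑ n ∈ Finset.range N, T (n + 1) s := by
      intro N
      have : (fun u => W u (∑ n ∈ Finset.range N, T n u))
          = fun u => ∑ n ∈ Finset.range N, W u (T n u) := funext fun u => map_sum (W u) _ _
      rw [this, intervalIntegral.integral_finset_sum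
        (fun n _ => (hInt n).intervalIntegrable _ _)]
    have hshift : Summable fun n => T (n + 1) s := (summable_nat_add_iff 1).mpr (hsum s)
    have hlim3 : Filter.Tendsto (fun N => ∑ n ∈ Finset.range N, T (n + 1) s)
        Filter.atTop (𝓝 (∑' n, T (n + 1) s)) := hshift.hasSum.tendsto_sum_nat
    have hkey : (∫ u in t0..s, W u (y u)) = ∑' n, T (n + 1) s := by
      apply tendsto_nhds_unique _ hlim3
      simpa only [hlim2] using hlim1
    have : y s = x + ∑' n, T (n + 1) s := by
      rw [hy]
      simp only
      rw [(hsum s).tsum_eq_zero_add, hT0]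
    rw [this, hkey]
  -- differentiation via FTC
  have hgcont : Continuous fun u => W u (y u) := hs_cont_apply W hW M hM hycont
  refine ⟨y, hy0, fun s => ?_⟩
  have hd : HasDerivAt (fun s' => x + ∫ u in t0..s', W u (y u)) (W s (y s)) s := by
    refine HasDerivAt.const_add x ?_
    exact intervalIntegral.integral_hasDerivAt_right (hgcont.intervalIntegrable t0 s)
      (hgcont.stronglyMeasurableAtFilter volume (nhds s)) hgcont.continuousAt
  have hyeq : (fun s' => x + ∫ u in t0..s', W u (y u)) = y := funext fun s' => (heq s').symm
  rw [hyeq] at hd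
  exact hd

/-- Constancy of inner products of two solutions of `y' = i V y` with `V` selfadjoint. -/
lemma inner_const_of_sa (V : ℝ → H →L[ℂ] H) (hsa : ∀ s, IsSelfAdjoint (V s))
    {y z : ℝ → H} (hy : ∀ s, HasDerivAt y (Complex.I • V s (y s)) s)
    (hz : ∀ s, HasDerivAt z (Complex.I • V s (z s)) s) (a b : ℝ) :
    (inner ℂ (y a) (z a) : ℂ) = inner ℂ (y b) (z b) := by
  have key : ∀ s : ℝ, HasDerivAt (fun u => (inner ℂ (y u) (z u) : ℂ)) 0 s := by
    intro s
    have := HasDerivAt.inner ℂ (hy s) (hz s)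
    refine this.congr_deriv ?_
    rw [inner_smul_right, inner_smul_left]
    have h1 : (inner ℂ (V s (y s)) (z s) : ℂ) = inner ℂ (y s) (V s (z s)) :=
      (hsa s).isSymmetric (y s) (z s)
    rw [h1, Complex.conj_I]
    ring
  have : (fun u => (inner ℂ (y u) (z u) : ℂ)) = fun _ => (inner ℂ (y a) (z a) : ℂ) := by
    funext u
    have : ∀ w : ℝ, (inner ℂ (y w) (z w) : ℂ) = inner ℂ (y a) (z a) := by
      intro w
      apply is_const_of_deriv_eq_zero (f := fun u => (inner ℂ (y u) (z u) : ℂ))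
      · intro u; exact (key u).differentiableAt
      · intro u; exact (key u).deriv
    exact this u
  exact (congrFun this b).symm


/-- Product rule for `u ↦ C u (y u)`. -/
lemma hasDerivAt_comp_apply {C : ℝ → H →L[ℂ] H} {y : ℝ → H} {D v : H} {s K : ℝ}
    (hK : ∀ u ∈ Set.Icc (s - 1) (s + 1), ‖C u‖ ≤ K)
    (hCd : HasDerivAt (fun u => C u (y s)) D s)
    (hCv : ContinuousAt (fun u => C u v) s)
    (hy : HasDerivAt y v s) :
    HasDerivAt (fun u => C u (y u)) (D + C s v) s := by
  have hr : HasDerivAt (fun u => C u (y u) - C u (y s)) (C s v) s := by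
    rw [hasDerivAt_iff_isLittleO]
    have hsplit : (fun u => (C u (y u) - C u (y s)) - (C s (y s) - C s (y s)) - (u - s) • C s v)
        = (fun u => C u (y u - y s - (u - s) • v)) + fun u => (u - s) • (C u v - C s v) := by
      funext u
      simp only [Pi.add_apply, map_sub, sub_self, sub_zero, map_smul_of_tower, smul_sub]
      abel
    rw [hsplit]
    apply Asymptotics.IsLittleO.add
    · have hbig : (fun u => C u (y u - y s - (u - s) • v))
          =O[𝓝 s] fun u => y u - y s - (u - s) • v := by
        rw [Asymptotics.isBigO_iff]
        refine ⟨K, ?_⟩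
        have : Set.Icc (s - 1) (s + 1) ∈ 𝓝 s := Icc_mem_nhds (by linarith) (by linarith)
        filter_upwards [this] with u hu
        exact (C u).le_of_opNorm_le (hK u hu) _
      exact hbig.trans_isLittleO (hasDerivAt_iff_isLittleO.mp hy)
    · rw [Asymptotics.isLittleO_iff]
      intro c hc
      have htend : Filter.Tendsto (fun u => ‖C u v - C s v‖) (𝓝 s) (𝓝 0) := by
        have := (hCv.sub (continuousAt_const (y := C s v))).norm
        simpa using this.tendsto
      have : ∀ᶠ u in 𝓝 s, ‖C u v - C s v‖ < c :=
        htend.eventually_lt_const hc |>.mono (by intro u h; simpa using h)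
      filter_upwards [this] with u hu
      rw [norm_smul, Real.norm_eq_abs, mul_comm]
      have : ‖u - s‖ = |u - s| := rfl
      calc ‖C u v - C s v‖ * |u - s| ≤ c * |u - s| :=
        mul_le_mul_of_nonneg_right hu.le (abs_nonneg _)
        _ = c * ‖u - s‖ := rfl
  have := hCd.add hr
  have heq : (fun u => C u (y s) + (C u (y u) - C u (y s))) = fun u => C u (y u) := by
    funext u; abel
  rw [← heq]
  exact this


end HSAux

section HS

variable {H : Type*} [NormedAddCommGroup H] [InnerProductSpace ℂ H] [CompleteSpace H]
variable {ι κ : Type*}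

/-- Parseval identity in `ℝ≥0∞`. -/
lemma parseval_ennreal (b : HilbertBasis ι ℂ H) (x : H) :
    ∑' i, ((‖(inner ℂ (b i) x : ℂ)‖₊ : ℝ≥0∞) ^ 2) = (‖x‖₊ : ℝ≥0∞) ^ 2 := by
  have h1 : HasSum (fun i => (inner ℂ x (b i) : ℂ) * (inner ℂ (b i) x : ℂ))
      (inner ℂ x x : ℂ) := b.hasSum_inner_mul_inner x x
  have h2 : HasSum (fun i => ‖(inner ℂ (b i) x : ℂ)‖ ^ 2) (‖x‖ ^ 2) := by
    have := h1.mapL Complex.reCLM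
    convert this using 2 with i
    · simp only [Complex.reCLM_apply, ← inner_conj_symm x (b i)]
      rw [← Complex.normSq_eq_conj_mul_self]
      simp [Complex.normSq_eq_norm_sq, ← Complex.ofReal_pow]
    · simp [inner_self_eq_norm_sq_to_K, ← Complex.ofReal_pow]
  have h3 : HasSum (fun i => (‖(inner ℂ (b i) x : ℂ)‖₊ ^ 2 : ℝ≥0)) (‖x‖₊ ^ 2) := by
    rw [← NNReal.hasSum_coe]
    push_cast
    exact h2
  calc ∑' i, ((‖(inner ℂ (b i) x : ℂ)‖₊ : ℝ≥0∞) ^ 2)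
      = ∑' i, ((‖(inner ℂ (b i) x : ℂ)‖₊ ^ 2 : ℝ≥0) : ℝ≥0∞) := by push_cast; rfl
    _ = ((‖x‖₊ ^ 2 : ℝ≥0) : ℝ≥0∞) := ENNReal.tsum_coe_eq h3
    _ = (‖x‖₊ : ℝ≥0∞) ^ 2 := by push_cast; rfl

/-- Hilbert–Schmidt sum via the adjoint, in any pair of Hilbert bases. -/
lemma hs_sum_adjoint (S : H →L[ℂ] H) (b : HilbertBasis ι ℂ H) (c : HilbertBasis κ ℂ H) :
    ∑' k : ι, ((‖S (b k)‖₊ : ℝ≥0∞) ^ 2)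
      = ∑' j : κ, ((‖(ContinuousLinearMap.adjoint S) (c j)‖₊ : ℝ≥0∞) ^ 2) := by
  have key : ∀ (k : ι) (j : κ),
      (‖(inner ℂ (c j) (S (b k)) : ℂ)‖₊ : ℝ≥0∞)
        = (‖(inner ℂ (b k) ((ContinuousLinearMap.adjoint S) (c j)) : ℂ)‖₊ : ℝ≥0∞) := by
    intro k j
    have h : ‖(inner ℂ (c j) (S (b k)) : ℂ)‖ = ‖(inner ℂ (b k) ((ContinuousLinearMap.adjoint S) (c j)) : ℂ)‖ := by
      rw [← ContinuousLinearMap.adjoint_inner_left]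
      exact norm_inner_symm _ _
    congr 1
    exact NNReal.coe_injective (by simpa using h)
  calc ∑' k : ι, ((‖S (b k)‖₊ : ℝ≥0∞) ^ 2)
      = ∑' k : ι, ∑' j : κ, ((‖(inner ℂ (c j) (S (b k)) : ℂ)‖₊ : ℝ≥0∞) ^ 2) := by
        exact tsum_congr fun k => (parseval_ennreal c (S (b k))).symm
    _ = ∑' j : κ, ∑' k : ι, ((‖(inner ℂ (b k) ((ContinuousLinearMap.adjoint S) (c j)) : ℂ)‖₊ : ℝ≥0∞) ^ 2) := by
        rw [ENNReal.tsum_comm]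
        exact tsum_congr fun j => tsum_congr fun k => by rw [key]
    _ = ∑' j : κ, ((‖(ContinuousLinearMap.adjoint S) (c j)‖₊ : ℝ≥0∞) ^ 2) :=
        tsum_congr fun j => parseval_ennreal b _

lemma hs_sum_basis_change (S : H →L[ℂ] H) (b : HilbertBasis ι ℂ H) (c : HilbertBasis ι ℂ H) :
    ∑' k : ι, ((‖S (b k)‖₊ : ℝ≥0∞) ^ 2) = ∑' k : ι, ((‖S (c k)‖₊ : ℝ≥0∞) ^ 2) :=
  (hs_sum_adjoint S b c).trans (hs_sum_adjoint S c c).symm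

end HS


/-- **Conservation of the Hilbert–Schmidt norm.**
Let `V_L, V_R : ℝ → B(H)` be strongly continuous, locally norm-bounded, selfadjoint families,
and let `C : ℝ → B(H)` satisfy, for every `x ∈ H`,
`i d/dt (C t x) = V_L t (C t x) + C t (V_R t x)`. If `C 0` is Hilbert–Schmidt (with respect to
an orthonormal basis `(e_k)`, i.e. `Σ_k ‖C 0 e_k‖² < ∞`), then `C t` is Hilbert–Schmidt for
every `t` and its Hilbert–Schmidt norm is conserved: `Σ_k ‖C t e_k‖² = Σ_k ‖C 0 e_k‖²`. -/
theorem hilbertSchmidt_norm_conserved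
    {H : Type*} [NormedAddCommGroup H] [InnerProductSpace ℂ H] [CompleteSpace H]
    {ι : Type*} (e : HilbertBasis ι ℂ H)
    (VL VR : ℝ → H →L[ℂ] H)
    (hVL_strong_cont : ∀ x : H, Continuous fun t => VL t x)
    (hVR_strong_cont : ∀ x : H, Continuous fun t => VR t x)
    (hVL_loc_bdd : ∀ T : ℝ, 0 < T → ∃ M : ℝ, ∀ t : ℝ, |t| ≤ T → ‖VL t‖ ≤ M)
    (hVR_loc_bdd : ∀ T : ℝ, 0 < T → ∃ M : ℝ, ∀ t : ℝ, |t| ≤ T → ‖VR t‖ ≤ M)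
    (hVL_sa : ∀ t : ℝ, IsSelfAdjoint (VL t))
    (hVR_sa : ∀ t : ℝ, IsSelfAdjoint (VR t))
    (C : ℝ → H →L[ℂ] H)
    (hC_ode : ∀ (x : H) (t : ℝ),
      HasDerivAt (fun τ : ℝ => C τ x) (-(Complex.I) • (VL t (C t x) + C t (VR t x))) t)
    (hHS0 : Summable fun k : ι => ‖C 0 (e k)‖ ^ 2) :
    ∀ t : ℝ, (Summable fun k : ι => ‖C t (e k)‖ ^ 2) ∧
      (∑' k : ι, ‖C t (e k)‖ ^ 2) = ∑' k : ι, ‖C 0 (e k)‖ ^ 2 := by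
  classical
  intro t
  -- Setup: clamped right potential
  set T : ℝ := |t| + 1 with hT
  have hTpos : (0:ℝ) < T := by positivity
  obtain ⟨M₀, hM₀⟩ := hVR_loc_bdd T hTpos
  set M : ℝ := max M₀ 0 with hM
  set θ : ℝ → ℝ := fun s => max (-T) (min T s) with hθ
  have hθcont : Continuous θ := continuous_const.max (continuous_const.min continuous_id)
  have hθmem : ∀ s, |θ s| ≤ T := by
    intro s
    rw [abs_le]
    refine ⟨le_max_left _ _, max_le (by linarith) (min_le_left _ _)⟩
  have hθeq : ∀ s, |s| ≤ T → θ s = s := by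
    intro s hs
    rw [abs_le] at hs
    rw [hθ]
    simp only
    rw [min_eq_right hs.2, max_eq_right hs.1]
  set W : ℝ → H →L[ℂ] H := fun s => Complex.I • VR (θ s) with hWdef
  have hWcont : ∀ x : H, Continuous fun s => W s x := by
    intro x
    have h1 : Continuous fun s => VR (θ s) x := (hVR_strong_cont x).comp hθcont
    have := h1.const_smul Complex.I
    convert this using 1
    rfl
  have hWbd : ∀ s, ‖W s‖ ≤ M := by
    intro s
    calc ‖W s‖ = ‖Complex.I‖ * ‖VR (θ s)‖ := norm_smul _ _
      _ = ‖VR (θ s)‖ := by rw [Complex.norm_I, one_mul]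
      _ ≤ M₀ := hM₀ _ (hθmem s)
      _ ≤ M := le_max_left _ _
  have hsa' : ∀ s, IsSelfAdjoint (VR (θ s)) := fun s => hVR_sa _
  -- solutions of `y' = i V_R y`
  have hsol : ∀ (t0 : ℝ) (x : H), ∃ y : ℝ → H, y t0 = x ∧
      ∀ s, HasDerivAt y (Complex.I • VR (θ s) (y s)) s := by
    intro t0 x
    obtain ⟨y, hy0, hyd⟩ := exists_global_solution W hWcont M hWbd t0 x
    exact ⟨y, hy0, fun s => by simpa [hWdef] using hyd s⟩
  choose Y hY0 hYd using fun k : ι => hsol t (e k)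
  set f : ι → H := fun k => Y k 0 with hf
  -- orthonormality of `f`
  have hfON : Orthonormal ℂ f := by
    rw [orthonormal_iff_ite]
    intro i j
    have h1 := inner_const_of_sa (fun s => VR (θ s)) hsa' (hYd i) (hYd j) 0 t
    rw [hY0, hY0] at h1
    rw [hf]
    simp only
    rw [h1]
    exact orthonormal_iff_ite.mp e.orthonormal i j
  -- completeness of `f`
  have hbot : (Submodule.span ℂ (Set.range f))ᗮ = ⊥ := by
    rw [Submodule.eq_bot_iff]
    intro z hz
    obtain ⟨w, hw0, hwd⟩ := hsol 0 z
    have hz' : ∀ k, (inner ℂ (f k) z : ℂ) = 0 := fun k =>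
      (Submodule.mem_orthogonal _ z).mp hz (f k) (Submodule.subset_span ⟨k, rfl⟩)
    have hwt : ∀ k, (inner ℂ (e k) (w t) : ℂ) = 0 := by
      intro k
      have h1 := inner_const_of_sa (fun s => VR (θ s)) hsa' (hYd k) hwd 0 t
      rw [hw0, hY0] at h1
      rw [← h1]
      exact hz' k
    have hwt0 : w t = 0 := by
      have hp := parseval_ennreal e (w t)
      have hzero : ∑' k, ((‖(inner ℂ (e k) (w t) : ℂ)‖₊ : ℝ≥0∞) ^ 2) = 0 := by
        rw [tsum_congr (fun k => by rw [hwt k]; simp : ∀ k : ι,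
          ((‖(inner ℂ (e k) (w t) : ℂ)‖₊ : ℝ≥0∞) ^ 2) = 0)]
        simp
      rw [hzero] at hp
      have : (‖w t‖₊ : ℝ≥0∞) = 0 := by
        have := hp.symm
        rwa [pow_eq_zero_iff (by norm_num)] at this
      simpa using this
    have h2 := inner_const_of_sa (fun s => VR (θ s)) hsa' hwd hwd 0 t
    rw [hw0, hwt0] at h2
    rw [inner_zero_left] at h2
    exact inner_self_eq_zero.mp h2
  set F : HilbertBasis ι ℂ H := HilbertBasis.mkOfOrthogonalEqBot hfON hbot with hFdef
  have hFe : ⇑F = f := HilbertBasis.coe_mkOfOrthogonalEqBot hfON hbot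
  -- local operator-norm bound on `C` via Banach–Steinhaus
  have hCcont : ∀ x : H, Continuous fun u => C u x := fun x =>
    continuous_iff_continuousAt.mpr fun u => (hC_ode x u).continuousAt
  obtain ⟨K, hK⟩ : ∃ K, ∀ u : Set.Icc (-(T+1)) (T+1), ‖C (u : ℝ)‖ ≤ K := by
    apply banach_steinhaus
    intro x
    obtain ⟨Cb, hCb⟩ := (isCompact_Icc (a := -(T+1)) (b := T+1)).exists_bound_of_continuousOn
      ((hCcont x).continuousOn)
    exact ⟨Cb, fun u => hCb u u.2⟩
  -- conservation of individual norms
  have hnorm : ∀ k, ‖C t (e k)‖ = ‖C 0 (f k)‖ := by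
    intro k
    set φ : ℝ → H := fun s => C s (Y k s) with hφ
    have hφd : ∀ s, |s| ≤ |t| → HasDerivAt φ (-(Complex.I) • VL s (φ s)) s := by
      intro s hs
      have hsT : |s| ≤ T := by rw [hT]; linarith
      have hKloc : ∀ u ∈ Set.Icc (s - 1) (s + 1), ‖C u‖ ≤ K := by
        intro u hu
        have hmem : u ∈ Set.Icc (-(T+1)) (T+1) := by
          rw [abs_le] at hsT
          exact ⟨by linarith [hu.1], by linarith [hu.2]⟩
        exact hK ⟨u, hmem⟩
      have hstep := hasDerivAt_comp_apply hKloc (hC_ode (Y k s) s)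
        ((hC_ode (Complex.I • VR (θ s) (Y k s)) s).continuousAt) (hYd k s)
      have hθs : θ s = s := hθeq s hsT
      rw [hθs] at hstep
      convert hstep using 1
      simp only [_root_.map_smul, smul_add]
      module
    set a : ℝ := min 0 t with ha
    set b : ℝ := max 0 t with hb
    have habs : ∀ s ∈ Set.Icc a b, |s| ≤ |t| := by
      intro s hs
      have h1 : -|t| ≤ a := le_min (neg_nonpos.mpr (abs_nonneg t)) (neg_abs_le t)
      have h2 : b ≤ |t| := max_le (abs_nonneg t) (le_abs_self t)
      rw [abs_le]
      exact ⟨by linarith [hs.1], by linarith [hs.2]⟩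
    have hφcont : ContinuousOn φ (Set.Icc a b) := fun s hs =>
      ((hφd s (habs s hs)).continuousAt).continuousWithinAt
    have hg : ∀ s ∈ Set.Ico a b, HasDerivWithinAt (fun u => (inner ℂ (φ u) (φ u) : ℂ)) 0 (Set.Ici s) s := by
      intro s hs
      have hd := hφd s (habs s ⟨hs.1, hs.2.le⟩)
      have hder := HasDerivAt.inner ℂ hd hd
      have hsym : (inner ℂ (VL s (φ s)) (φ s) : ℂ) = inner ℂ (φ s) (VL s (φ s)) :=
        (hVL_sa s).isSymmetric (φ s) (φ s)
      have hzero : (inner ℂ (φ s) (-(Complex.I) • VL s (φ s)) : ℂ)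
          + inner ℂ (-(Complex.I) • VL s (φ s)) (φ s) = 0 := by
        rw [inner_smul_right, inner_smul_left, hsym]
        simp only [map_neg, Complex.conj_I]
        ring
      rw [hzero] at hder
      exact hder.hasDerivWithinAt
    have hconst := constant_of_has_deriv_right_zero
      (ContinuousOn.inner hφcont hφcont) hg
    have h0mem : (0:ℝ) ∈ Set.Icc a b := ⟨min_le_left _ _, le_max_left _ _⟩
    have htmem : t ∈ Set.Icc a b := ⟨min_le_right _ _, le_max_right _ _⟩
    have heq1 : (inner ℂ (φ t) (φ t) : ℂ) = inner ℂ (φ 0) (φ 0) :=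
      (hconst t htmem).trans (hconst 0 h0mem).symm
    have heq3 : ‖φ t‖ ^ 2 = ‖φ 0‖ ^ 2 := by
      have h := congrArg (RCLike.re (K := ℂ)) heq1
      rwa [inner_self_eq_norm_sq, inner_self_eq_norm_sq] at h
    have heq4 : ‖φ t‖ = ‖φ 0‖ := by
      rw [← Real.sqrt_sq (norm_nonneg (φ t)), ← Real.sqrt_sq (norm_nonneg (φ 0)), heq3]
    have hφt : φ t = C t (e k) := by rw [hφ]; simp only; rw [hY0]
    have hφ0 : φ 0 = C 0 (f k) := rfl
    rw [← hφt, ← hφ0, heq4]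
  -- sum bookkeeping
  have hEt : ∑' k : ι, ((‖C t (e k)‖₊ : ℝ≥0∞) ^ 2) = ∑' k : ι, ((‖C 0 (e k)‖₊ : ℝ≥0∞) ^ 2) := by
    have h1 : ∀ k, (‖C t (e k)‖₊ : ℝ≥0∞) = (‖C 0 (f k)‖₊ : ℝ≥0∞) := by
      intro k
      congr 1
      exact NNReal.coe_injective (by simpa using hnorm k)
    calc ∑' k : ι, ((‖C t (e k)‖₊ : ℝ≥0∞) ^ 2)
        = ∑' k : ι, ((‖C 0 (F k)‖₊ : ℝ≥0∞) ^ 2) := by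
          refine tsum_congr fun k => ?_
          rw [h1 k, hFe]
      _ = ∑' k : ι, ((‖C 0 (e k)‖₊ : ℝ≥0∞) ^ 2) := hs_sum_basis_change (C 0) F e
  have hsum0 : Summable fun k : ι => (‖C 0 (e k)‖₊ ^ 2 : ℝ≥0) := by
    rw [← NNReal.summable_coe]
    convert hHS0 using 2 with k
    all_goals (try push_cast); (try rfl)
  have hcoe0 : ∑' k : ι, ((‖C 0 (e k)‖₊ : ℝ≥0∞) ^ 2)
      = ((∑' k : ι, (‖C 0 (e k)‖₊ ^ 2 : ℝ≥0) : ℝ≥0) : ℝ≥0∞) := by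
    rw [ENNReal.coe_tsum hsum0]
    push_cast
    rfl
  have hsumt : Summable fun k : ι => (‖C t (e k)‖₊ ^ 2 : ℝ≥0) := by
    rw [← ENNReal.tsum_coe_ne_top_iff_summable]
    have : ∑' k : ι, ((‖C t (e k)‖₊ ^ 2 : ℝ≥0) : ℝ≥0∞) = ∑' k : ι, ((‖C t (e k)‖₊ : ℝ≥0∞) ^ 2) := by
      push_cast
      rfl
    rw [this, hEt, hcoe0]
    exact ENNReal.coe_ne_top
  have hcoet : ∑' k : ι, ((‖C t (e k)‖₊ : ℝ≥0∞) ^ 2)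
      = ((∑' k : ι, (‖C t (e k)‖₊ ^ 2 : ℝ≥0) : ℝ≥0) : ℝ≥0∞) := by
    rw [ENNReal.coe_tsum hsumt]
    push_cast
    rfl
  have hNN : (∑' k : ι, (‖C t (e k)‖₊ ^ 2 : ℝ≥0)) = ∑' k : ι, (‖C 0 (e k)‖₊ ^ 2 : ℝ≥0) := by
    have := hEt
    rw [hcoet, hcoe0] at this
    exact_mod_cast this
  constructor
  · have := NNReal.summable_coe.mpr hsumt
    convert this using 2 with k
    all_goals (try push_cast); (try rfl)
  · have h1 : (∑' k : ι, ‖C t (e k)‖ ^ 2) = ((∑' k : ι, (‖C t (e k)‖₊ ^ 2 : ℝ≥0) : ℝ≥0) : ℝ) := by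
      rw [NNReal.coe_tsum]
      refine tsum_congr fun k => ?_
      push_cast
      rfl
    have h2 : (∑' k : ι, ‖C 0 (e k)‖ ^ 2) = ((∑' k : ι, (‖C 0 (e k)‖₊ ^ 2 : ℝ≥0) : ℝ≥0) : ℝ) := by
      rw [NNReal.coe_tsum]
      refine tsum_congr fun k => ?_
      push_cast
      rfl
    rw [h1, h2, hNN]
end

section
/- Let V_L, V_R : ℝ → B(H) be strongly continuous, locally norm-bounded, with V_L(t), V_R(t) selfadjoint for every t, and let C : ℝ → B(H) satisfy, for every x ∈ H, that t ↦ C(t)x is differentiable with i d/dt(C(t)x) = V_L(t)C(t)x + C(t)V_R(t)x. Then the operator norm is conserved: ‖C(t)‖_{B(H)} = ‖C(0)‖_{B(H)} for all t ∈ ℝ. -/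
open ContinuousLinearMap

open Set

set_option linter.unusedSectionVars false

section aux
variable {H : Type*} [NormedAddCommGroup H] [InnerProductSpace ℂ H] [CompleteSpace H]

theorem lin_ode_local (A : ℝ → H →L[ℂ] H) (hA : ∀ x : H, Continuous fun t => A t x)
    (M : ℝ) (hM0 : 0 ≤ M) {a b : ℝ} (hbd : ∀ t ∈ Icc a b, ‖A t‖ ≤ M)
    (hlen : b - a ≤ 1 / (2 * (M + 1))) {t0 : ℝ} (ht0 : t0 ∈ Icc a b) (x0 : H) :
    ∃ u : ℝ → H, u t0 = x0 ∧ ∀ t ∈ Icc a b, HasDerivWithinAt u (A t (u t)) (Icc a b) t := by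
  have hpl : IsPicardLindelof (fun t x => A t x) (⟨t0, ht0⟩ : Icc a b) x0 (‖x0‖₊ + 1) 0
      (M * (2 * ‖x0‖ + 1)).toNNReal M.toNNReal := by
    constructor
    · intro t ht
      refine ((A t).lipschitz.weaken ?_).lipschitzOnWith
      rw [← NNReal.coe_le_coe, coe_nnnorm, Real.coe_toNNReal _ hM0]
      exact hbd t ht
    · exact fun x _ => (hA x).continuousOn
    · intro t ht x hx
      have h1 : ‖A t x‖ ≤ ‖A t‖ * ‖x‖ := (A t).le_opNorm x
      have h2 : ‖x‖ ≤ ‖x0‖ + (‖x0‖ + 1) := by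
        have := mem_closedBall_iff_norm.mp hx
        simp only [NNReal.coe_add, coe_nnnorm, NNReal.coe_one] at this
        have h3 := norm_sub_norm_le x x0
        linarith
      have h4 := hbd t ht
      rw [Real.coe_toNNReal _ (by positivity)]
      nlinarith [norm_nonneg (A t), norm_nonneg x, norm_nonneg x0, (A t).opNorm_nonneg]
    · have hmax : max (b - t0) (t0 - a) ≤ 1 / (2 * (M + 1)) :=
        max_le (by linarith [ht0.1]) (by linarith [ht0.2])
      have hmax0 : 0 ≤ max (b - t0) (t0 - a) := le_max_of_le_left (by linarith [ht0.2])
      have hC0 : 0 ≤ M * (2 * ‖x0‖ + 1) := by positivity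
      rw [Real.coe_toNNReal _ hC0]
      simp only [NNReal.coe_add, coe_nnnorm, NNReal.coe_one, NNReal.coe_zero, sub_zero]
      have hM1 : (0:ℝ) < 2 * (M + 1) := by linarith
      have key : M * (2 * ‖x0‖ + 1) * (1 / (2 * (M + 1))) ≤ ‖x0‖ + 1 := by
        rw [mul_one_div, div_le_iff₀ hM1]
        nlinarith [norm_nonneg x0]
      calc M * (2 * ‖x0‖ + 1) * max (b - t0) (t0 - a)
          ≤ M * (2 * ‖x0‖ + 1) * (1 / (2 * (M + 1))) := by
            exact mul_le_mul_of_nonneg_left hmax hC0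
        _ ≤ ‖x0‖ + 1 := key
  exact hpl.exists_eq_forall_mem_Icc_hasDerivWithinAt₀

theorem glue_sol (A : ℝ → H →L[ℂ] H) {a c b : ℝ} (hac : a ≤ c) (hcb : c ≤ b)
    {u1 u2 : ℝ → H} (heq : u2 c = u1 c)
    (h1 : ∀ t ∈ Icc a c, HasDerivWithinAt u1 (A t (u1 t)) (Icc a c) t)
    (h2 : ∀ t ∈ Icc c b, HasDerivWithinAt u2 (A t (u2 t)) (Icc c b) t) :
    ∀ t ∈ Icc a b, HasDerivWithinAt (fun τ => if τ ≤ c then u1 τ else u2 τ)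
      (A t ((fun τ => if τ ≤ c then u1 τ else u2 τ) t)) (Icc a b) t := by
  set u : ℝ → H := fun τ => if τ ≤ c then u1 τ else u2 τ with hu
  have hagree1 : ∀ τ ∈ Icc a c, u τ = u1 τ := fun τ hτ => if_pos hτ.2
  have hagree2 : ∀ τ ∈ Icc c b, u τ = u2 τ := by
    intro τ hτ
    rcases eq_or_lt_of_le hτ.1 with h | h
    · simp only [hu, ← h, le_refl, if_pos, heq]
    · exact if_neg (not_le.mpr h)
  intro t ht
  have key : HasDerivWithinAt u (A t (u t)) (Icc a c ∪ Icc c b) t := by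
    apply HasDerivWithinAt.union
    · by_cases h : t ∈ Icc a c
      · have := (h1 t h).congr hagree1 (hagree1 t h)
        rwa [← hagree1 t h] at this
      · exact HasFDerivWithinAt.of_notMem_closure (by rwa [isClosed_Icc.closure_eq])
    · by_cases h : t ∈ Icc c b
      · have := (h2 t h).congr hagree2 (hagree2 t h)
        rwa [← hagree2 t h] at this
      · exact HasFDerivWithinAt.of_notMem_closure (by rwa [isClosed_Icc.closure_eq])
  rwa [Icc_union_Icc_eq_Icc hac hcb] at key

theorem lin_ode_fwd (A : ℝ → H →L[ℂ] H) (hA : ∀ x : H, Continuous fun t => A t x)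
    (M : ℝ) (hM0 : 0 ≤ M) :
    ∀ (n : ℕ) {a b : ℝ}, a ≤ b → (∀ t ∈ Icc a b, ‖A t‖ ≤ M) →
      b - a ≤ (n + 1 : ℝ) * (1 / (2 * (M + 1))) → ∀ x0 : H,
      ∃ u : ℝ → H, u a = x0 ∧ ∀ t ∈ Icc a b, HasDerivWithinAt u (A t (u t)) (Icc a b) t := by
  intro n
  induction n with
  | zero =>
    intro a b hab hbd hlen x0
    exact lin_ode_local A hA M hM0 hbd (by push_cast at hlen; linarith)
      ⟨le_refl a, hab⟩ x0
  | succ n ih =>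
    intro a b hab hbd hlen x0
    by_cases hsmall : b - a ≤ 1 / (2 * (M + 1))
    · exact lin_ode_local A hA M hM0 hbd hsmall ⟨le_refl a, hab⟩ x0
    · push_neg at hsmall
      have hh : (0:ℝ) < 1 / (2 * (M + 1)) := by positivity
      set h : ℝ := 1 / (2 * (M + 1)) with hdef
      set c : ℝ := a + h with hc
      have hac : a ≤ c := by simp [hc]; linarith
      have hcb : c ≤ b := by simp [hc]; linarith
      obtain ⟨u1, hu1a, hu1⟩ := lin_ode_local A hA M hM0
        (fun t ht => hbd t ⟨ht.1, ht.2.trans hcb⟩) (by simp only [hc]; rw [hdef]; ring_nf; exact le_refl _) ⟨le_refl a, hac⟩ x0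
      obtain ⟨u2, hu2c, hu2⟩ := ih hcb (fun t ht => hbd t ⟨hac.trans ht.1, ht.2⟩)
        (by push_cast at hlen ⊢; simp [hc]; linarith) (u1 c)
      refine ⟨fun τ => if τ ≤ c then u1 τ else u2 τ, by simp [hac, hu1a], ?_⟩
      exact glue_sol A hac hcb hu2c hu1 hu2

theorem lin_ode_sol (A : ℝ → H →L[ℂ] H) (hA : ∀ x : H, Continuous fun t => A t x)
    (M : ℝ) (hM0 : 0 ≤ M) {a b : ℝ} (hbd : ∀ t ∈ Icc a b, ‖A t‖ ≤ M)
    {t0 : ℝ} (ht0 : t0 ∈ Icc a b) (x0 : H) :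
    ∃ u : ℝ → H, u t0 = x0 ∧ ∀ t ∈ Icc a b, HasDerivWithinAt u (A t (u t)) (Icc a b) t := by
  have hh : (0:ℝ) < 1 / (2 * (M + 1)) := by positivity
  obtain ⟨n, hn⟩ := exists_nat_ge ((b - a) / (1 / (2 * (M + 1))))
  have hlen : b - a ≤ (n + 1 : ℝ) * (1 / (2 * (M + 1))) := by
    rw [div_le_iff₀ hh] at hn
    nlinarith
  -- forward solution on [t0, b]
  obtain ⟨u2, hu2, hder2⟩ := lin_ode_fwd A hA M hM0 n ht0.2
    (fun t ht => hbd t ⟨ht0.1.trans ht.1, ht.2⟩) (by linarith [ht0.1]) x0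
  -- backward: time-reversed system on [a, t0]
  set B : ℝ → H →L[ℂ] H := fun τ => -(A (a + t0 - τ)) with hB
  have hBc : ∀ x : H, Continuous fun τ => B τ x := by
    intro x
    have : Continuous fun τ : ℝ => A (a + t0 - τ) x :=
      (hA x).comp (by continuity)
    show Continuous fun τ => (-(A (a + t0 - τ))) x
    simp only [neg_apply]
    exact this.neg
  have hBbd : ∀ τ ∈ Icc a t0, ‖B τ‖ ≤ M := by
    intro τ hτ
    have : a + t0 - τ ∈ Icc a b := ⟨by linarith [hτ.2], by linarith [hτ.1, ht0.2]⟩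
    simpa [hB] using hbd _ this
  obtain ⟨w, hwa, hderw⟩ := lin_ode_fwd B hBc M hM0 n ht0.1 hBbd
    (by linarith [ht0.2]) x0
  set u1 : ℝ → H := fun τ => w (a + t0 - τ) with hu1
  have hu1t0 : u1 t0 = x0 := by simp [hu1, hwa]
  have hder1 : ∀ t ∈ Icc a t0, HasDerivWithinAt u1 (A t (u1 t)) (Icc a t0) t := by
    intro t ht
    have hmem : a + t0 - t ∈ Icc a t0 := ⟨by linarith [ht.2], by linarith [ht.1]⟩
    have hw := hderw (a + t0 - t) hmem
    have hσ : HasDerivWithinAt (fun τ : ℝ => a + t0 - τ) (-1) (Icc a t0) t :=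
      ((hasDerivAt_id t).const_sub (a + t0)).hasDerivWithinAt
    have hmap : MapsTo (fun τ : ℝ => a + t0 - τ) (Icc a t0) (Icc a t0) := by
      intro τ hτ
      simp only [mem_Icc] at hτ ⊢
      constructor <;> linarith
    have hcomp := hw.scomp t hσ hmap
    have harg : a + t0 - (a + t0 - t) = t := by ring
    simp only [hB, harg, Function.comp_def] at hcomp
    simpa [hu1] using hcomp
  refine ⟨fun τ => if τ ≤ t0 then u1 τ else u2 τ, by simp [hu1t0], ?_⟩
  exact glue_sol A ht0.1 ht0.2 (by rw [hu2, hu1t0]) hder1 hder2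

theorem const_of_derivWithin_Icc_zero {E : Type*} [NormedAddCommGroup E] [NormedSpace ℝ E]
    {f : ℝ → E} {a b : ℝ}
    (hf : ∀ t ∈ Icc a b, HasDerivWithinAt f 0 (Icc a b) t) :
    ∀ t ∈ Icc a b, f t = f a := by
  apply constant_of_has_deriv_right_zero
  · exact fun t ht => (hf t ht).continuousWithinAt
  · intro x hx
    have h1 : HasDerivWithinAt f 0 (Icc x b) x :=
      (hf x ⟨hx.1, hx.2.le⟩).mono (Icc_subset_Icc hx.1 le_rfl)
    rw [← Ici_inter_Iic] at h1
    exact (hasDerivWithinAt_inter (Iic_mem_nhds hx.2)).mp h1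

theorem sol_norm_conserved {A : ℝ → H →L[ℂ] H}
    (hskew : ∀ (t : ℝ) (x : H), (inner ℂ x (A t x) : ℂ).re = 0)
    {a b : ℝ} {u : ℝ → H}
    (hu : ∀ t ∈ Icc a b, HasDerivWithinAt u (A t (u t)) (Icc a b) t) :
    ∀ t ∈ Icc a b, ‖u t‖ = ‖u a‖ := by
  have hconst : ∀ t ∈ Icc a b, (inner ℂ (u t) (u t) : ℂ) = inner ℂ (u a) (u a) := by
    apply const_of_derivWithin_Icc_zero
    intro t ht
    have hd := HasDerivWithinAt.inner ℂ (hu t ht) (hu t ht)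
    have hz : (inner ℂ (u t) (A t (u t)) : ℂ) + inner ℂ (A t (u t)) (u t) = 0 := by
      have h1 : (inner ℂ (A t (u t)) (u t) : ℂ) =
          starRingEnd ℂ (inner ℂ (u t) (A t (u t))) := (inner_conj_symm _ _).symm
      rw [h1, Complex.add_conj, hskew t (u t)]
      simp
    rwa [hz] at hd
  intro t ht
  have h2 := hconst t ht
  rw [inner_self_eq_norm_sq_to_K, inner_self_eq_norm_sq_to_K] at h2
  have h3 : (‖u t‖ : ℝ) ^ 2 = ‖u a‖ ^ 2 := by exact_mod_cast h2
  rw [← Real.sqrt_sq (norm_nonneg (u t)), ← Real.sqrt_sq (norm_nonneg (u a)), h3]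

theorem deriv_clm_apply_comp {C : ℝ → H →L[ℂ] H} {w : ℝ → H} {w' : H}
    {s : Set ℝ} {t : ℝ} {D : H → H} {M : ℝ}
    (hC : ∀ x : H, HasDerivAt (fun τ => C τ x) (D x) t)
    (hCb : ∀ᶠ τ in nhdsWithin t s, ‖C τ‖ ≤ M)
    (hw : HasDerivWithinAt w w' s t) :
    HasDerivWithinAt (fun τ => C τ (w τ)) (D (w t) + C t w') s t := by
  have h1 : HasDerivWithinAt (fun τ => C τ (w t)) (D (w t)) s t :=
    (hC (w t)).hasDerivWithinAt
  have h2 : HasDerivWithinAt (fun τ => (τ - t) • (C τ w')) (C t w') s t := by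
    have hc : HasDerivAt (fun τ : ℝ => τ - t) 1 t := (hasDerivAt_id t).sub_const t
    have := hc.smul (hC w')
    have h' := this.hasDerivWithinAt (s := s)
    simp at h'
    exact h'
  have hlo := hasDerivWithinAt_iff_isLittleO.mp hw
  have hbig : (fun τ => C τ (w τ - w t - (τ - t) • w')) =O[nhdsWithin t s]
      (fun τ => w τ - w t - (τ - t) • w') := by
    rw [Asymptotics.isBigO_iff]
    refine ⟨max M 0, ?_⟩
    filter_upwards [hCb] with τ hτ
    calc ‖C τ (w τ - w t - (τ - t) • w')‖
        ≤ ‖C τ‖ * ‖w τ - w t - (τ - t) • w'‖ := (C τ).le_opNorm _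
      _ ≤ max M 0 * ‖w τ - w t - (τ - t) • w'‖ :=
          mul_le_mul_of_nonneg_right (hτ.trans (le_max_left _ _)) (norm_nonneg _)
  have h3' := hbig.trans_isLittleO hlo
  have h3 : HasDerivWithinAt (fun τ => C τ (w τ - w t - (τ - t) • w')) 0 s t := by
    rw [hasDerivWithinAt_iff_isLittleO]
    simpa using h3'
  have hsum := (h1.add h2).add h3
  have hfun : ∀ τ, C τ (w t) + (τ - t) • (C τ w') + C τ (w τ - w t - (τ - t) • w')
      = C τ (w τ) := by
    intro τ
    have hsm : (τ - t) • (C τ w') = C τ ((τ - t) • w') :=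
      ((C τ).map_smul_of_tower (τ - t) w').symm
    rw [hsm, ← map_add, ← map_add]
    congr 1
    abel
  have hres := hsum.congr (fun τ _ => (hfun τ).symm) (hfun t).symm
  simpa using hres
/-- skew pairing for `c • V` with `V` selfadjoint and `conj c = -c`. -/
theorem skew_pair {V : H →L[ℂ] H} (hV : IsSelfAdjoint V) {c : ℂ} (hc : starRingEnd ℂ c = -c)
    (u w : H) : (inner ℂ u ((c • V) w) : ℂ) + inner ℂ ((c • V) u) w = 0 := by
  have hsym := hV.isSymmetric
  have h1 : (inner ℂ u ((c • V) w) : ℂ) = c * inner ℂ u (V w) := by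
    simp [inner_smul_right]
  have h2 : (inner ℂ ((c • V) u) w : ℂ) = (starRingEnd ℂ c) * inner ℂ (V u) w := by
    simp [inner_smul_left, mul_comm]
  have h3 : (inner ℂ (V u) w : ℂ) = inner ℂ u (V w) := hsym u w
  rw [h1, h2, hc, h3]
  ring

end aux

/-- **Conservation of the operator norm.**
Let `V_L, V_R : ℝ → B(H)` be strongly continuous, locally norm-bounded, selfadjoint families,
and let `C : ℝ → B(H)` satisfy, for every `x ∈ H`,
`i d/dt (C t x) = V_L t (C t x) + C t (V_R t x)`. Then the operator norm is conserved:
`‖C t‖ = ‖C 0‖` for all `t`. -/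
theorem operator_norm_conserved
    {H : Type*} [NormedAddCommGroup H] [InnerProductSpace ℂ H] [CompleteSpace H]
    (VL VR : ℝ → H →L[ℂ] H)
    (hVL_strong_cont : ∀ x : H, Continuous fun t => VL t x)
    (hVR_strong_cont : ∀ x : H, Continuous fun t => VR t x)
    (hVL_loc_bdd : ∀ T : ℝ, 0 < T → ∃ M : ℝ, ∀ t : ℝ, |t| ≤ T → ‖VL t‖ ≤ M)
    (hVR_loc_bdd : ∀ T : ℝ, 0 < T → ∃ M : ℝ, ∀ t : ℝ, |t| ≤ T → ‖VR t‖ ≤ M)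
    (hVL_sa : ∀ t : ℝ, IsSelfAdjoint (VL t))
    (hVR_sa : ∀ t : ℝ, IsSelfAdjoint (VR t))
    (C : ℝ → H →L[ℂ] H)
    (hC_ode : ∀ (x : H) (t : ℝ),
      HasDerivAt (fun τ : ℝ => C τ x) (-(Complex.I) • (VL t (C t x) + C t (VR t x))) t) :
    ∀ t : ℝ, ‖C t‖ = ‖C 0‖ := by
  have hCcont : ∀ x : H, Continuous fun τ => C τ x := fun x =>
    continuous_iff_continuousAt.mpr fun τ => (hC_ode x τ).continuousAt
  have key : ∀ a b : ℝ, a ≤ b → ∀ s ∈ Icc a b, ∀ r ∈ Icc a b, ‖C s‖ ≤ ‖C r‖ := by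
    intro a b hab s hs r hr
    obtain ⟨ML, hML⟩ := hVL_loc_bdd (|a| + |b| + 1) (by positivity)
    obtain ⟨MR, hMR⟩ := hVR_loc_bdd (|a| + |b| + 1) (by positivity)
    have habs : ∀ τ ∈ Icc a b, |τ| ≤ |a| + |b| + 1 := by
      intro τ hτ
      rw [abs_le]
      constructor
      · have h1 := neg_abs_le a
        have := abs_nonneg b
        have := hτ.1
        linarith
      · have h1 := le_abs_self b
        have := abs_nonneg a
        have := hτ.2
        linarith
    set M : ℝ := max (max ML MR) 0 with hM
    have hM0 : 0 ≤ M := le_max_right _ _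
    set AL : ℝ → H →L[ℂ] H := fun τ => (-Complex.I) • VL τ with hAL
    set AR : ℝ → H →L[ℂ] H := fun τ => Complex.I • VR τ with hAR
    have hALc : ∀ x : H, Continuous fun τ => AL τ x := by
      intro x
      simp only [hAL, smul_apply]
      exact (hVL_strong_cont x).const_smul _
    have hARc : ∀ x : H, Continuous fun τ => AR τ x := by
      intro x
      simp only [hAR, smul_apply]
      exact (hVR_strong_cont x).const_smul _
    have hALbd : ∀ τ ∈ Icc a b, ‖AL τ‖ ≤ M := by
      intro τ hτ
      have : ‖AL τ‖ = ‖VL τ‖ := by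
        simp [hAL, norm_smul]
      rw [this]
      exact (hML τ (habs τ hτ)).trans ((le_max_left ML MR).trans (le_max_left _ _))
    have hARbd : ∀ τ ∈ Icc a b, ‖AR τ‖ ≤ M := by
      intro τ hτ
      have : ‖AR τ‖ = ‖VR τ‖ := by
        simp [hAR, norm_smul]
      rw [this]
      exact (hMR τ (habs τ hτ)).trans ((le_max_right ML MR).trans (le_max_left _ _))
    have hcL : starRingEnd ℂ (-Complex.I) = -(-Complex.I) := by simp
    have hcR : starRingEnd ℂ (Complex.I) = -(Complex.I) := by simp
    have hALpair : ∀ (τ : ℝ) (u w : H),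
        (inner ℂ u (AL τ w) : ℂ) + inner ℂ (AL τ u) w = 0 := fun τ =>
      skew_pair (hVL_sa τ) hcL
    have hARpair : ∀ (τ : ℝ) (u w : H),
        (inner ℂ u (AR τ w) : ℂ) + inner ℂ (AR τ u) w = 0 := fun τ =>
      skew_pair (hVR_sa τ) hcR
    have hskew_of_pair : ∀ {A : ℝ → H →L[ℂ] H},
        (∀ (τ : ℝ) (u w : H), (inner ℂ u (A τ w) : ℂ) + inner ℂ (A τ u) w = 0) →
        ∀ (τ : ℝ) (x : H), (inner ℂ x (A τ x) : ℂ).re = 0 := by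
      intro A hp τ x
      have h := hp τ x x
      have h2 : (inner ℂ (A τ x) x : ℂ) = starRingEnd ℂ (inner ℂ x (A τ x)) :=
        (inner_conj_symm _ _).symm
      rw [h2, Complex.add_conj] at h
      have := congrArg Complex.re h
      simpa using this
    -- operator norm bound for C on Icc a b
    obtain ⟨MC, hMC⟩ : ∃ MC : ℝ, ∀ i : Icc a b, ‖C (i : ℝ)‖ ≤ MC := by
      apply banach_steinhaus
      intro x
      obtain ⟨Cx, hCx⟩ := isCompact_Icc.exists_bound_of_continuousOn
        ((hCcont x).continuousOn (s := Icc a b))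
      exact ⟨Cx, fun i => hCx i i.2⟩
    -- main estimate
    have claim : ∀ x : H, ‖C s x‖ ≤ ‖C r‖ * ‖x‖ := by
      intro x
      set y : H := C s x with hy
      obtain ⟨uL, huLs, hderL⟩ := lin_ode_sol AL hALc M hM0 hALbd hs y
      obtain ⟨uR, huRs, hderR⟩ := lin_ode_sol AR hARc M hM0 hARbd hs x
      have hnL := sol_norm_conserved (hskew_of_pair hALpair) hderL
      have hnR := sol_norm_conserved (hskew_of_pair hARpair) hderR
      -- derivative of v τ = C τ (uR τ)
      have hv : ∀ τ ∈ Icc a b, HasDerivWithinAt (fun ρ => C ρ (uR ρ))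
          (AL τ (C τ (uR τ))) (Icc a b) τ := by
        intro τ hτ
        have hCb : ∀ᶠ ρ in nhdsWithin τ (Icc a b), ‖C ρ‖ ≤ MC :=
          Filter.eventually_of_mem self_mem_nhdsWithin (fun ρ hρ => hMC ⟨ρ, hρ⟩)
        have hd := deriv_clm_apply_comp (fun z => hC_ode z τ) hCb (hderR τ hτ)
        have hval : -(Complex.I) • (VL τ (C τ (uR τ)) + C τ (VR τ (uR τ)))
            + C τ (AR τ (uR τ)) = AL τ (C τ (uR τ)) := by
          simp only [hAR, hAL, smul_apply, map_smul, smul_add]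
          module
        rwa [hval] at hd
      -- g is constant
      have hg : ∀ τ ∈ Icc a b, HasDerivWithinAt
          (fun ρ => (inner ℂ (uL ρ) (C ρ (uR ρ)) : ℂ)) 0 (Icc a b) τ := by
        intro τ hτ
        have hd := HasDerivWithinAt.inner ℂ (hderL τ hτ) (hv τ hτ)
        have hz := hALpair τ (uL τ) (C τ (uR τ))
        rwa [hz] at hd
      have hconst := const_of_derivWithin_Icc_zero hg
      have heq : (inner ℂ (uL r) (C r (uR r)) : ℂ) = inner ℂ y (C s x) := by
        rw [hconst r hr, ← hconst s hs, huLs, huRs]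
      have hyy : (inner ℂ y (C s x) : ℂ) = inner ℂ y y := by rw [hy]
      have hnorm1 : ‖(inner ℂ y y : ℂ)‖ = ‖y‖ ^ 2 := by
        rw [inner_self_eq_norm_sq_to_K]
        push_cast
        simp [sq_abs]
      have hbound : ‖(inner ℂ (uL r) (C r (uR r)) : ℂ)‖ ≤ ‖y‖ * (‖C r‖ * ‖x‖) := by
        calc ‖(inner ℂ (uL r) (C r (uR r)) : ℂ)‖ ≤ ‖uL r‖ * ‖C r (uR r)‖ :=
              norm_inner_le_norm _ _
          _ ≤ ‖uL r‖ * (‖C r‖ * ‖uR r‖) :=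
              mul_le_mul_of_nonneg_left ((C r).le_opNorm _) (norm_nonneg _)
          _ = ‖y‖ * (‖C r‖ * ‖x‖) := by
              rw [hnL r hr, ← hnL s hs, huLs, hnR r hr, ← hnR s hs, huRs]
      rw [heq, hyy, hnorm1] at hbound
      rcases eq_or_lt_of_le (norm_nonneg y) with h0 | h0
      · rw [hy] at h0
        rw [← h0]
        positivity
      · nlinarith [norm_nonneg (C r), norm_nonneg x]
    exact opNorm_le_bound _ (norm_nonneg (C r)) claim
  intro t
  rcases le_total 0 t with h | h
  · exact le_antisymm
      (key 0 t h t ⟨h, le_refl t⟩ 0 ⟨le_refl 0, h⟩)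
      (key 0 t h 0 ⟨le_refl 0, h⟩ t ⟨h, le_refl t⟩)
  · exact le_antisymm
      (key t 0 h t ⟨le_refl t, h⟩ 0 ⟨h, le_refl 0⟩)
      (key t 0 h 0 ⟨h, le_refl 0⟩ t ⟨le_refl t, h⟩)
end

section
/- Let H : ℝ → B(𝓗) with H(t) selfadjoint for every t, and let w : ℝ → B(𝓗) be differentiable in operator norm and satisfy the anticommutator equation i w'(t) = H(t) w(t) + w(t) H(t). Then the density matrix K(t) := w(t) w(t)* is differentiable in operator norm and satisfies the von Neumann equation i K'(t) = H(t) K(t) − K(t) H(t). -/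
set_option maxHeartbeats 1000000


open ContinuousLinearMap

/-- **From the anticommutator (wave-matrix) equation to the von Neumann equation.**
Let `H t ∈ B(𝓗)` be selfadjoint for every `t`, and let `w : ℝ → B(𝓗)` be differentiable in
operator norm with `i w'(t) = H t w t + w t H t`. Then the density matrix
`K t := w t (w t)*` is differentiable in operator norm and satisfies the von Neumann equation
`i K'(t) = H t K t − K t H t`. -/
theorem wave_matrix_to_von_Neumann
    {𝓗 : Type*} [NormedAddCommGroup 𝓗] [InnerProductSpace ℂ 𝓗] [CompleteSpace 𝓗]
    (Hop : ℝ → 𝓗 →L[ℂ] 𝓗)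
    (hH_sa : ∀ t : ℝ, IsSelfAdjoint (Hop t))
    (w : ℝ → 𝓗 →L[ℂ] 𝓗)
    (hw_ode : ∀ t : ℝ,
      HasDerivAt w (-(Complex.I) • ((Hop t) ∘L (w t) + (w t) ∘L (Hop t))) t) :
    ∀ t : ℝ,
      HasDerivAt (fun τ : ℝ => (w τ) ∘L adjoint (w τ))
        (-(Complex.I) •
          ((Hop t) ∘L ((w t) ∘L adjoint (w t)) - ((w t) ∘L adjoint (w t)) ∘L (Hop t))) t := by
  intro t
  -- star map as a continuous ℝ-linear map
  let S : (𝓗 →L[ℂ] 𝓗) →L[ℝ] (𝓗 →L[ℂ] 𝓗) := (starL' ℝ : (𝓗 →L[ℂ] 𝓗) ≃L[ℝ] (𝓗 →L[ℂ] 𝓗)).toContinuousLinearMap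
  -- composition as a continuous ℝ-bilinear map
  let B : (𝓗 →L[ℂ] 𝓗) →L[ℝ] (𝓗 →L[ℂ] 𝓗) →L[ℝ] (𝓗 →L[ℂ] 𝓗) :=
    (restrictScalarsL ℂ (𝓗 →L[ℂ] 𝓗) (𝓗 →L[ℂ] 𝓗) ℝ ℝ).comp ((compL ℂ 𝓗 𝓗 𝓗).restrictScalars ℝ)
  have hBapp : ∀ a b : (𝓗 →L[ℂ] 𝓗), B a b = a ∘L b := fun a b => rfl
  have hSapp : ∀ a : (𝓗 →L[ℂ] 𝓗), S a = star a := fun a => rfl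
  set w' : (𝓗 →L[ℂ] 𝓗) := -(Complex.I) • ((Hop t) ∘L (w t) + (w t) ∘L (Hop t)) with hw'
  have hw : HasDerivAt w w' t := hw_ode t
  have hstar : HasDerivAt (fun τ => S (w τ)) (S w') t :=
    (S.hasFDerivAt.comp_hasDerivAt t hw)
  have hc : HasDerivAt (fun τ => B (w τ)) (B w') t :=
    (B.hasFDerivAt.comp_hasDerivAt t hw)
  have hK : HasDerivAt (fun τ => B (w τ) (S (w τ)))
      ((B w') (S (w t)) + (B (w t)) (S w')) t := hc.clm_apply hstar
  have hfun : (fun τ : ℝ => (w τ) ∘L adjoint (w τ)) = fun τ => B (w τ) (S (w τ)) := by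
    funext τ
    rw [hBapp, hSapp, star_eq_adjoint]
  rw [hfun]
  convert hK using 1
  rw [hBapp, hBapp, hSapp, hSapp, ← star_eq_adjoint]
  have hH : star (Hop t) = Hop t := hH_sa t
  -- work in the algebra: ∘L is mul
  simp only [hw', star_smul, star_add, star_mul'] at *
  show -(Complex.I) • ((Hop t) * ((w t) * star (w t)) - ((w t) * star (w t)) * (Hop t))
      = (-(Complex.I) • ((Hop t) * (w t) + (w t) * (Hop t))) * star (w t)
      + (w t) * (star (-(Complex.I)) • (star ((Hop t) * (w t)) + star ((w t) * (Hop t))))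
  rw [star_mul, star_mul, hH]
  simp only [Complex.star_def, map_neg, Complex.conj_I, neg_neg]
  noncomm_ring
  simp only [neg_smul, one_smul, smul_add, smul_neg, neg_neg]
  module
end

section
/- Let 𝓗 be a complex Hilbert space and N ≥ 0 a real number. Then the set { ½(w w* + w* w) : w a Hilbert–Schmidt operator on 𝓗 with operator norm ‖w‖ ≤ 1 and tr(w w*) = N } coincides with the set of density matrices { K ∈ B(𝓗) : K selfadjoint, trace class, 0 ≤ K ≤ 1, tr K = N }. In particular, every density matrix K in the second set arises from the wave matrix w = K^{1/2} (which satisfies w w* = w* w = K). -/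
open ContinuousLinearMap

noncomputable section

variable {𝓗 : Type*} [NormedAddCommGroup 𝓗] [InnerProductSpace ℂ 𝓗] [CompleteSpace 𝓗]
  {ι : Type*}

/-- The set of operators of the form `½(w w* + w* w)` where `w` is a Hilbert–Schmidt
wave matrix with operator norm `‖w‖ ≤ 1` and `tr (w w*) = ‖w‖²_{HS} = N`
(Hilbert–Schmidt property and trace expressed via the orthonormal basis `e`). -/
def waveMatrixDensities (e : HilbertBasis ι ℂ 𝓗) (N : ℝ) : Set (𝓗 →L[ℂ] 𝓗) :=
  {K | ∃ w : 𝓗 →L[ℂ] 𝓗,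
    (Summable fun k : ι => ‖w (e k)‖ ^ 2) ∧ ‖w‖ ≤ 1 ∧
    (∑' k : ι, ‖w (e k)‖ ^ 2) = N ∧
    K = (1 / 2 : ℂ) • (w ∘L adjoint w + adjoint w ∘L w)}

/-- The set of density matrices: selfadjoint trace-class operators `K` with `0 ≤ K ≤ 1` and
`tr K = N` (for a nonnegative operator, the trace-class property and the trace are expressed
through the summability of the diagonal in the orthonormal basis `e`). -/
def densityMatrices (e : HilbertBasis ι ℂ 𝓗) (N : ℝ) : Set (𝓗 →L[ℂ] 𝓗) :=
  {K | IsSelfAdjoint K ∧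
    (∀ x : 𝓗, 0 ≤ (inner ℂ x (K x) : ℂ).re ∧ (inner ℂ x (K x) : ℂ).re ≤ ‖x‖ ^ 2) ∧
    (Summable fun k : ι => (inner ℂ (e k) (K (e k)) : ℂ).re) ∧
    (∑' k : ι, (inner ℂ (e k) (K (e k)) : ℂ).re) = N}


set_option maxHeartbeats 1000000
set_option synthInstance.maxHeartbeats 400000
set_option linter.unusedSectionVars false

open scoped ENNReal NNReal

lemma aux_parseval_hasSum (e : HilbertBasis ι ℂ 𝓗) (x : 𝓗) :
    HasSum (fun j : ι => ‖(inner ℂ (e j) x : ℂ)‖ ^ 2) (‖x‖ ^ 2) := by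
  have h := e.hasSum_inner_mul_inner x x
  have h' := h.mapL Complex.reCLM
  have hterm : ∀ j : ι, Complex.reCLM ((inner ℂ x (e j) : ℂ) * inner ℂ (e j) x)
      = ‖(inner ℂ (e j) x : ℂ)‖ ^ 2 := by
    intro j
    rw [← inner_conj_symm (e j) x, RCLike.mul_conj]
    simp [norm_inner_symm x (e j), RCLike.norm_conj, ← Complex.ofReal_pow]
  have hx : Complex.reCLM (inner ℂ x x : ℂ) = ‖x‖ ^ 2 := by
    simpa using inner_self_eq_norm_sq (𝕜 := ℂ) x
  rw [hx] at h'
  simpa only [hterm] using h'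

/-- Parseval in `ℝ≥0∞`. -/

lemma aux_parseval_ennreal (e : HilbertBasis ι ℂ 𝓗) (x : 𝓗) :
    ∑' j : ι, ((‖(inner ℂ (e j) x : ℂ)‖₊ ^ 2 : ℝ≥0) : ℝ≥0∞) = ((‖x‖₊ ^ 2 : ℝ≥0) : ℝ≥0∞) := by
  apply ENNReal.tsum_coe_eq
  rw [← NNReal.hasSum_coe]
  simpa using aux_parseval_hasSum e x

/-- The Hilbert–Schmidt "norm" of the adjoint equals that of the operator, in `ℝ≥0∞`. -/

lemma aux_adjoint_tsum (e : HilbertBasis ι ℂ 𝓗) (w : 𝓗 →L[ℂ] 𝓗) :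
    ∑' k : ι, ((‖(adjoint w) (e k)‖₊ ^ 2 : ℝ≥0) : ℝ≥0∞)
      = ∑' k : ι, ((‖w (e k)‖₊ ^ 2 : ℝ≥0) : ℝ≥0∞) := by
  have key : ∀ j k : ι, ‖(inner ℂ (e j) ((adjoint w) (e k)) : ℂ)‖₊
      = ‖(inner ℂ (e k) (w (e j)) : ℂ)‖₊ := by
    intro j k
    rw [adjoint_inner_right]
    refine NNReal.coe_injective ?_
    simp only [coe_nnnorm]
    exact norm_inner_symm _ _
  calc ∑' k : ι, ((‖(adjoint w) (e k)‖₊ ^ 2 : ℝ≥0) : ℝ≥0∞)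
      = ∑' k : ι, ∑' j : ι, ((‖(inner ℂ (e j) ((adjoint w) (e k)) : ℂ)‖₊ ^ 2 : ℝ≥0) : ℝ≥0∞) := by
        refine tsum_congr fun k => ?_
        rw [aux_parseval_ennreal e ((adjoint w) (e k))]
    _ = ∑' j : ι, ∑' k : ι, ((‖(inner ℂ (e j) ((adjoint w) (e k)) : ℂ)‖₊ ^ 2 : ℝ≥0) : ℝ≥0∞) :=
        ENNReal.tsum_comm
    _ = ∑' j : ι, ∑' k : ι, ((‖(inner ℂ (e k) (w (e j)) : ℂ)‖₊ ^ 2 : ℝ≥0) : ℝ≥0∞) := by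
        refine tsum_congr fun j => tsum_congr fun k => ?_
        rw [key]
    _ = ∑' j : ι, ((‖w (e j)‖₊ ^ 2 : ℝ≥0) : ℝ≥0∞) := by
        refine tsum_congr fun j => aux_parseval_ennreal e (w (e j))

/-- If `w` is Hilbert–Schmidt along `e`, so is its adjoint and the sums agree. -/

lemma aux_adjoint_summable (e : HilbertBasis ι ℂ 𝓗) (w : 𝓗 →L[ℂ] 𝓗)
    (hw : Summable fun k : ι => ‖w (e k)‖ ^ 2) :
    (Summable fun k : ι => ‖(adjoint w) (e k)‖ ^ 2) ∧
      (∑' k : ι, ‖(adjoint w) (e k)‖ ^ 2) = ∑' k : ι, ‖w (e k)‖ ^ 2 := by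
  have hw' : Summable fun k : ι => ((‖w (e k)‖₊ ^ 2 : ℝ≥0) : ℝ) := by
    simpa using hw
  have hfin : ∑' k : ι, ((‖w (e k)‖₊ ^ 2 : ℝ≥0) : ℝ≥0∞) ≠ ∞ :=
    ENNReal.tsum_coe_ne_top_iff_summable_coe.mpr hw'
  have hfin' : ∑' k : ι, ((‖(adjoint w) (e k)‖₊ ^ 2 : ℝ≥0) : ℝ≥0∞) ≠ ∞ := by
    rw [aux_adjoint_tsum]; exact hfin
  have hsum' : Summable fun k : ι => ((‖(adjoint w) (e k)‖₊ ^ 2 : ℝ≥0) : ℝ) :=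
    ENNReal.tsum_coe_ne_top_iff_summable_coe.mp hfin'
  have hsum : Summable fun k : ι => ‖(adjoint w) (e k)‖ ^ 2 := by simpa using hsum'
  refine ⟨hsum, ?_⟩
  have h1 := ENNReal.coe_tsum (NNReal.summable_coe.mp hsum')
  have h2 := ENNReal.coe_tsum (NNReal.summable_coe.mp hw')
  have h3 : (∑' k : ι, (‖(adjoint w) (e k)‖₊ ^ 2 : ℝ≥0))
      = ∑' k : ι, (‖w (e k)‖₊ ^ 2 : ℝ≥0) := by
    have := aux_adjoint_tsum e w
    rw [← h1, ← h2] at this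
    exact_mod_cast this
  calc (∑' k : ι, ‖(adjoint w) (e k)‖ ^ 2)
      = ((∑' k : ι, (‖(adjoint w) (e k)‖₊ ^ 2 : ℝ≥0) : ℝ≥0) : ℝ) := by
        rw [NNReal.coe_tsum]; push_cast; simp
    _ = ((∑' k : ι, (‖w (e k)‖₊ ^ 2 : ℝ≥0) : ℝ≥0) : ℝ) := by rw [h3]
    _ = ∑' k : ι, ‖w (e k)‖ ^ 2 := by rw [NNReal.coe_tsum]; push_cast; simp

lemma aux_re_inner_self (x : 𝓗) : (inner ℂ x x : ℂ).re = ‖x‖ ^ 2 := by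
  simpa using inner_self_eq_norm_sq (𝕜 := ℂ) x

lemma aux_sa (w : 𝓗 →L[ℂ] 𝓗) :
    IsSelfAdjoint ((1 / 2 : ℂ) • (w ∘L adjoint w + adjoint w ∘L w)) := by
  rw [IsSelfAdjoint, star_smul, star_add]
  simp only [star_eq_adjoint, adjoint_comp, adjoint_adjoint]
  rw [add_comm]
  congr 1
  simp [Complex.ext_iff]

lemma aux_re_apply (w : 𝓗 →L[ℂ] 𝓗) (x : 𝓗) :
    (inner ℂ x (((1 / 2 : ℂ) • (w ∘L adjoint w + adjoint w ∘L w)) x) : ℂ).re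
      = (‖adjoint w x‖ ^ 2 + ‖w x‖ ^ 2) / 2 := by
  have h1 : (inner ℂ x ((w ∘L adjoint w) x) : ℂ) = ((‖adjoint w x‖ ^ 2 : ℝ) : ℂ) := by
    rw [comp_apply, ← adjoint_inner_left w (adjoint w x) x, inner_self_eq_norm_sq_to_K]
    norm_cast
  have h2 : (inner ℂ x ((adjoint w ∘L w) x) : ℂ) = ((‖w x‖ ^ 2 : ℝ) : ℂ) := by
    rw [comp_apply, adjoint_inner_right, inner_self_eq_norm_sq_to_K]
    norm_cast
  rw [smul_apply, inner_smul_right, add_apply, inner_add_right, h1, h2]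
  rw [← Complex.ofReal_add]
  rw [show ((1:ℂ)/2) * ((‖adjoint w x‖ ^ 2 + ‖w x‖ ^ 2 : ℝ) : ℂ)
      = (((‖adjoint w x‖ ^ 2 + ‖w x‖ ^ 2) / 2 : ℝ) : ℂ) by push_cast; ring]
  exact Complex.ofReal_re _

lemma aux_re_symm (K : 𝓗 →L[ℂ] 𝓗) (x : 𝓗) :
    ((inner ℂ (K x) x : ℂ)).re = ((inner ℂ x (K x) : ℂ)).re := by
  rw [← inner_conj_symm x (K x)]
  exact (Complex.conj_re _).symm

lemma aux_key (e : HilbertBasis ι ℂ 𝓗) (N : ℝ) :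
    ∀ K ∈ densityMatrices e N, ∃ w : 𝓗 →L[ℂ] 𝓗,
      IsSelfAdjoint w ∧ (∀ x : 𝓗, 0 ≤ (inner ℂ x (w x) : ℂ).re) ∧
      w ∘L w = K ∧
      (Summable fun k : ι => ‖w (e k)‖ ^ 2) ∧ ‖w‖ ≤ 1 ∧
      (∑' k : ι, ‖w (e k)‖ ^ 2) = N ∧
      w ∘L adjoint w = K ∧ adjoint w ∘L w = K := by
  rintro K ⟨hsa, hbound, hsum, htr⟩
  have hpos : 0 ≤ K := by
    rw [nonneg_iff_isPositive]
    refine ⟨isSelfAdjoint_iff_isSymmetric.mp hsa, fun x => ?_⟩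
    simpa [reApplyInnerSelf, aux_re_symm K x] using (hbound x).1
  have hle1 : K ≤ 1 := by
    rw [le_def]
    refine ⟨isSelfAdjoint_iff_isSymmetric.mp ((IsSelfAdjoint.one (R := 𝓗 →L[ℂ] 𝓗)).sub hsa), fun x => ?_⟩
    have h2 := (hbound x).2
    have : RCLike.re (inner ℂ ((1 - K) x) x : ℂ) = ‖x‖ ^ 2 - (inner ℂ (K x) x : ℂ).re := by
      simp [sub_apply, one_apply, inner_sub_left, aux_re_inner_self, ← Complex.ofReal_pow]
    simp only [reApplyInnerSelf, this, aux_re_symm K x]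
    linarith
  set w := CFC.sqrt K with hw
  have hwnn : 0 ≤ w := CFC.sqrt_nonneg (a := K)
  have hwsa : IsSelfAdjoint w := .of_nonneg hwnn
  have hww : w ∘L w = K := by
    have := CFC.sq_sqrt K hpos
    rwa [sq] at this
  have hadj : adjoint w = w := hwsa
  have hdiag : ∀ x : 𝓗, ‖w x‖ ^ 2 = ((inner ℂ x (K x) : ℂ)).re := by
    intro x
    have h1 : (inner ℂ x (K x) : ℂ) = inner ℂ (w x) (w x) := by
      rw [← hww]
      have := adjoint_inner_left w (w x) x
      rw [hadj] at this
      rw [comp_apply, ← this]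
    rw [h1, aux_re_inner_self]
  have hKn : ‖K‖ ≤ 1 := (CStarAlgebra.norm_le_one_iff_of_nonneg K hpos).2 hle1
  have hwn : ‖w‖ ≤ 1 := by
    have hmul : ‖w‖ * ‖w‖ = ‖K‖ := by
      have := CStarRing.norm_star_mul_self (x := w)
      rw [hwsa.star_eq, show w * w = K from hww] at this
      exact this.symm
    nlinarith [norm_nonneg w]
  refine ⟨w, hwsa, fun x => ?_, hww, ?_, hwn, ?_, ?_, ?_⟩
  · have := ((nonneg_iff_isPositive w).1 hwnn).2 x
    simpa [reApplyInnerSelf, aux_re_symm w x] using this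
  · exact hsum.congr fun k => (hdiag (e k)).symm
  · rw [tsum_congr fun k => hdiag (e k)]; exact htr
  · rw [hadj]; exact hww
  · rw [hadj]; exact hww

/-- **Wave matrices realize exactly the density matrices.**
For a complex Hilbert space `𝓗` and `N ≥ 0`, the set
`{½(w w* + w* w) : w Hilbert–Schmidt, ‖w‖ ≤ 1, tr(w w*) = N}` coincides with the set of
density matrices `{K : K selfadjoint, trace class, 0 ≤ K ≤ 1, tr K = N}`. In particular,
every density matrix `K` arises from the wave matrix `w = K^{1/2}`: a nonnegative
selfadjoint `w` with `w² = K`, which then satisfies `w w* = w* w = K`. -/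

theorem waveMatrixDensities_eq_densityMatrices
    (e : HilbertBasis ι ℂ 𝓗) (N : ℝ) (hN : 0 ≤ N) :
    waveMatrixDensities e N = densityMatrices e N ∧
    ∀ K ∈ densityMatrices e N, ∃ w : 𝓗 →L[ℂ] 𝓗,
      IsSelfAdjoint w ∧ (∀ x : 𝓗, 0 ≤ (inner ℂ x (w x) : ℂ).re) ∧
      w ∘L w = K ∧
      (Summable fun k : ι => ‖w (e k)‖ ^ 2) ∧ ‖w‖ ≤ 1 ∧
      (∑' k : ι, ‖w (e k)‖ ^ 2) = N ∧
      w ∘L adjoint w = K ∧ adjoint w ∘L w = K := by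
  refine ⟨?_, aux_key e N⟩
  ext K
  constructor
  · rintro ⟨w, hws, hwn, hwt, rfl⟩
    have hA := aux_adjoint_summable e w hws
    have hAs := hA.1
    have hAt : (∑' k : ι, ‖adjoint w (e k)‖ ^ 2) = N := hA.2.trans hwt
    have hAn : ‖(adjoint w : 𝓗 →L[ℂ] 𝓗)‖ ≤ 1 := by
      rw [show ‖(adjoint w : 𝓗 →L[ℂ] 𝓗)‖ = ‖w‖ from adjoint.norm_map w]
      exact hwn
    refine ⟨aux_sa w, fun x => ?_, ?_, ?_⟩
    · rw [aux_re_apply]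
      have e1 : ‖adjoint w x‖ ≤ ‖x‖ := by
        calc ‖adjoint w x‖ ≤ ‖(adjoint w : 𝓗 →L[ℂ] 𝓗)‖ * ‖x‖ := le_opNorm _ x
          _ ≤ 1 * ‖x‖ := mul_le_mul_of_nonneg_right hAn (norm_nonneg x)
          _ = ‖x‖ := one_mul _
      have e2 : ‖w x‖ ≤ ‖x‖ := by
        calc ‖w x‖ ≤ ‖w‖ * ‖x‖ := le_opNorm _ x
          _ ≤ 1 * ‖x‖ := mul_le_mul_of_nonneg_right hwn (norm_nonneg x)
          _ = ‖x‖ := one_mul _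
      constructor
      · positivity
      · nlinarith [norm_nonneg x, norm_nonneg (adjoint w x), norm_nonneg (w x)]
    · exact ((hAs.add hws).div_const 2).congr fun k => (aux_re_apply w (e k)).symm
    · calc (∑' k : ι, (inner ℂ (e k)
            (((1 / 2 : ℂ) • (w ∘L adjoint w + adjoint w ∘L w)) (e k)) : ℂ).re)
          = ∑' k : ι, (‖adjoint w (e k)‖ ^ 2 + ‖w (e k)‖ ^ 2) / 2 :=
            tsum_congr fun k => aux_re_apply w (e k)
        _ = (∑' k : ι, (‖adjoint w (e k)‖ ^ 2 + ‖w (e k)‖ ^ 2)) / 2 := tsum_div_const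
        _ = (N + N) / 2 := by rw [Summable.tsum_add hAs hws, hAt, hwt]
        _ = N := by ring
  · intro hK
    obtain ⟨w, _, _, _, hs, hn, ht, h1, h2⟩ := aux_key e N K hK
    refine ⟨w, hs, hn, ht, ?_⟩
    rw [h1, h2]
    module

end
end
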